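/- arXiv:2405.05567 — 6 statements merged into one kernel-verified Lean document; each statement's English description precedes it below -/
import Mathlib

section
/- Let G be an m×n matrix over F_q that generates a linear code C whose dual code has minimum distance at least r+1. If X is uniform on F_q^n, K is uniform on F_q^m and independent of X, and X̃ = X + KG, then for every subset R of [n] of size r, the mutual information I(X_R; X̃) = 0, where X_R denotes the restriction of X to coordinates in R. -/
open ProbabilityTheory MeasureTheory Finset Matrix

open ProbabilityTheory MeasureTheory Finset Matrix

lemma fiber_card_eq {α β : Type*} [Fintype α] [DecidableEq β] [AddGroup α] [AddGroup β]
    (φ : α →+ β) (hφ : Function.Surjective φ) (b : β) :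
    (univ.filter fun a => φ a = b).card = (univ.filter fun a => φ a = 0).card := by
  obtain ⟨a0, rfl⟩ := hφ b
  apply Finset.card_bij' (fun a _ => a - a0) (fun a _ => a + a0)
  · intro a ha
    simp only [mem_filter, mem_univ, true_and] at ha ⊢
    rw [map_sub, ha, sub_self]
  · intro a ha
    simp only [mem_filter, mem_univ, true_and] at ha ⊢
    rw [map_add, ha, zero_add]
  · intro a _; simp
  · intro a _; simp

lemma preimage_card_mul {α β : Type*} [Fintype α] [Fintype β] [DecidableEq β]
    [AddGroup α] [AddGroup β]
    (φ : α →+ β) (hφ : Function.Surjective φ) (s : Finset β) :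
    (univ.filter fun a => φ a ∈ s).card * Fintype.card β = s.card * Fintype.card α := by
  set c := (univ.filter fun a => φ a = 0).card with hc
  have key : ∀ s : Finset β, (univ.filter fun a => φ a ∈ s).card = s.card * c := by
    intro s
    rw [Finset.card_eq_sum_card_fiberwise (f := φ) (t := s)
      (s := univ.filter fun a => φ a ∈ s) (fun a ha => (mem_filter.mp (Finset.mem_coe.mp ha)).2)]
    have hfib : ∀ b ∈ s,
        ((univ.filter fun a => φ a ∈ s).filter fun a => φ a = b).card = c := by
      intro b hb
      rw [Finset.filter_filter, hc, ← fiber_card_eq φ hφ b]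
      congr 1
      apply Finset.filter_congr
      intro a _
      constructor
      · exact fun h => h.2
      · exact fun h => ⟨h ▸ hb, h⟩
    rw [Finset.sum_congr rfl hfib, Finset.sum_const, smul_eq_mul]
  have htot : Fintype.card α = Fintype.card β * c := by
    have h := key univ
    simpa [card_univ] using h
  rw [key, htot]
  ring

lemma unif_meas {α : Type*} [Fintype α] [Nonempty α] [MeasurableSpace α]
    (S : Set α) (hS : MeasurableSet S) [DecidablePred (· ∈ S)] :
    (PMF.uniformOfFintype α).toMeasure S
      = (univ.filter (· ∈ S)).card * (Fintype.card α : ENNReal)⁻¹ := by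
  rw [PMF.toMeasure_apply _ hS]
  rw [tsum_eq_sum (s := Finset.univ) (by simp)]
  have : ∀ a : α, S.indicator (⇑(PMF.uniformOfFintype α)) a
      = if a ∈ S then (Fintype.card α : ENNReal)⁻¹ else 0 := by
    intro a
    rw [Set.indicator_apply]
    simp [PMF.uniformOfFintype_apply]
  rw [Finset.sum_congr rfl (fun a _ => this a), ← Finset.sum_filter,
    Finset.sum_const, nsmul_eq_mul]


/-- Perfect `r`-subset privacy of the encoding `X̃ = X + K·G`: if the dual of the code
generated by `G` has minimum distance at least `r+1` (every nonzero vector in the kernel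
of `G` has Hamming weight at least `r+1`), `X` is uniform on `F^n`, `K` is uniform on
`F^m` and independent of `X`, then for every `r`-subset `R` of coordinates, `X_R` and
`X̃` are independent, i.e. `I(X_R; X̃) = 0`. -/
theorem subset_privacy {F : Type*} [Field F] [Fintype F] [DecidableEq F] {m n r : ℕ}
    (G : Matrix (Fin m) (Fin n) F)
    (hdual : ∀ v : Fin n → F, Matrix.mulVec G v = 0 → v ≠ 0 → r + 1 ≤ hammingNorm v)
    (R : Finset (Fin n)) (hR : R.card = r) :
    letI : MeasurableSpace F := ⊤
    ProbabilityTheory.IndepFun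
      (fun ω : (Fin n → F) × (Fin m → F) => fun i : ↥R => ω.1 (i : Fin n))
      (fun ω : (Fin n → F) × (Fin m → F) => ω.1 + Matrix.vecMul ω.2 G)
      (PMF.uniformOfFintype ((Fin n → F) × (Fin m → F))).toMeasure := by
  classical
  letI : MeasurableSpace F := (⊤ : MeasurableSpace F)
  haveI : MeasurableSingletonClass F := ⟨fun _ => trivial⟩
  set M : Matrix (Fin m) ↥R F := G.submatrix id (fun i : ↥R => (i : Fin n)) with hM
  -- injectivity of mulVec M
  have hMinj : ∀ v : ↥R → F, M.mulVec v = 0 → v = 0 := by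
    intro v hv
    set v' : Fin n → F := fun j => if h : j ∈ R then v ⟨j, h⟩ else 0 with hv'
    have hGv' : G.mulVec v' = 0 := by
      funext j
      have hsub : ∑ i ∈ R, G j i * v' i = ∑ i : Fin n, G j i * v' i := by
        apply Finset.sum_subset (Finset.subset_univ R)
        intro i _ hi
        simp only [hv', dif_neg hi, mul_zero]
      have hsubt : ∑ i ∈ R, G j i * v' i = ∑ i : ↥R, G j ↑i * v' ↑i :=
        Finset.sum_subtype R (fun x => Iff.rfl) _
      calc G.mulVec v' j = ∑ i : Fin n, G j i * v' i := rfl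
        _ = ∑ i : ↥R, G j ↑i * v' ↑i := by rw [← hsub, hsubt]
        _ = ∑ i : ↥R, M j i * v i := by
            apply Finset.sum_congr rfl
            intro a _
            simp only [hv', dif_pos a.2, hM, Matrix.submatrix_apply, id_eq]
        _ = M.mulVec v j := rfl
        _ = 0 := by rw [hv]; rfl
    have hv'0 : v' = 0 := by
      by_contra hne
      have hge := hdual v' hGv' hne
      have hle : hammingNorm v' ≤ r := by
        rw [← hR]
        unfold hammingNorm
        apply Finset.card_le_card
        intro i hi
        rw [Finset.mem_filter] at hi
        by_contra hiR
        exact hi.2 (by simp only [hv', dif_neg hiR])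
      omega
    funext i
    have h0 := congrFun hv'0 ↑i
    simpa [hv', dif_pos i.2] using h0
  have hMinj' : Function.Injective M.mulVecLin := by
    rw [← LinearMap.ker_eq_bot, Matrix.ker_mulVecLin_eq_bot_iff]
    exact hMinj
  have hrankM : M.rank = r := by
    rw [Matrix.rank, LinearMap.finrank_range_of_inj hMinj', Module.finrank_pi,
      Fintype.card_coe, hR]
  have hsurjM : Function.Surjective M.vecMulLinear := by
    rw [← LinearMap.range_eq_top]
    apply Submodule.eq_top_of_finrank_eq
    rw [← Matrix.mulVecLin_transpose]
    have hT : Mᵀ.rank = r := by rw [Matrix.rank_transpose, hrankM]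
    rw [show Module.finrank F ↥(LinearMap.range Mᵀ.mulVecLin) = Mᵀ.rank from rfl, hT,
      Module.finrank_pi, Fintype.card_coe, hR]
  have hθ : Function.Surjective
      (fun k : Fin m → F => fun i : ↥R => Matrix.vecMul k G ↑i) := by
    intro b
    obtain ⟨k, hk⟩ := hsurjM b
    refine ⟨k, ?_⟩
    funext i
    have h1 := congrFun hk i
    simpa [Matrix.vecMulLinear_apply, Matrix.vecMul, dotProduct, hM,
      Matrix.submatrix_apply] using h1
  -- the additive homs
  set fhom : ((Fin n → F) × (Fin m → F)) →+ (↥R → F) :=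
    { toFun := fun ω => fun i : ↥R => ω.1 ↑i
      map_zero' := rfl
      map_add' := fun _ _ => rfl } with hfhom
  set ghom : ((Fin n → F) × (Fin m → F)) →+ (Fin n → F) :=
    { toFun := fun ω => ω.1 + Matrix.vecMul ω.2 G
      map_zero' := by simp
      map_add' := by
        intro a b
        simp only [Prod.fst_add, Prod.snd_add, Matrix.add_vecMul]
        abel } with hghom
  set hhom : ((Fin n → F) × (Fin m → F)) →+ (↥R → F) × (Fin n → F) := fhom.prod ghom with hhhom
  have hfsurj : Function.Surjective fhom := by
    intro a
    refine ⟨((fun j => if h : j ∈ R then a ⟨j, h⟩ else 0), 0), ?_⟩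
    funext i
    simp [hfhom, dif_pos i.2]
  have hgsurj : Function.Surjective ghom := by
    intro y
    refine ⟨(y, 0), ?_⟩
    simp [hghom]
  have hhsurj : Function.Surjective hhom := by
    rintro ⟨a, y⟩
    obtain ⟨k, hk⟩ := hθ (fun i => y ↑i - a i)
    refine ⟨(y - Matrix.vecMul k G, k), ?_⟩
    rw [hhhom]
    refine Prod.ext ?_ ?_
    · funext i
      have := congrFun hk i
      simp only [hfhom, AddMonoidHom.prod_apply, AddMonoidHom.coe_mk, ZeroHom.coe_mk,
        Pi.sub_apply] at this ⊢
      rw [this]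
      ring
    · simp [hghom]
  -- measure computation
  rw [ProbabilityTheory.indepFun_iff_measure_inter_preimage_eq_mul]
  intro s t _ _
  set sF : Finset (↥R → F) := univ.filter (· ∈ s) with hsF
  set tF : Finset (Fin n → F) := univ.filter (· ∈ t) with htF
  have ha := preimage_card_mul hhom hhsurj (sF ×ˢ tF)
  have hb := preimage_card_mul fhom hfsurj sF
  have hd := preimage_card_mul ghom hgsurj tF
  rw [Finset.card_product, Fintype.card_prod] at ha
  set A : ℕ := (univ.filter fun ω : ((Fin n → F) × (Fin m → F)) => hhom ω ∈ sF ×ˢ tF).card with hA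
  set Bc : ℕ := (univ.filter fun ω : ((Fin n → F) × (Fin m → F)) => fhom ω ∈ sF).card with hBc
  set D : ℕ := (univ.filter fun ω : ((Fin n → F) × (Fin m → F)) => ghom ω ∈ tF).card with hD
  have key : A * Fintype.card ((Fin n → F) × (Fin m → F)) = Bc * D := by
    apply Nat.eq_of_mul_eq_mul_right
      (Nat.mul_pos (Fintype.card_pos (α := ↥R → F)) (Fintype.card_pos (α := Fin n → F)))
    calc A * Fintype.card ((Fin n → F) × (Fin m → F)) * (Fintype.card (↥R → F) * Fintype.card (Fin n → F))
        = (A * (Fintype.card (↥R → F) * Fintype.card (Fin n → F))) * Fintype.card ((Fin n → F) × (Fin m → F)) := by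
          ring
      _ = ((sF.card * tF.card) * Fintype.card ((Fin n → F) × (Fin m → F))) * Fintype.card ((Fin n → F) × (Fin m → F)) := by rw [ha]
      _ = (sF.card * Fintype.card ((Fin n → F) × (Fin m → F))) * (tF.card * Fintype.card ((Fin n → F) × (Fin m → F))) := by ring
      _ = (Bc * Fintype.card (↥R → F)) * (D * Fintype.card (Fin n → F)) := by rw [hb, hd]
      _ = Bc * D * (Fintype.card (↥R → F) * Fintype.card (Fin n → F)) := by ring
  set c : ENNReal := (Fintype.card ((Fin n → F) × (Fin m → F)) : ENNReal) with hc
  have e1 : (PMF.uniformOfFintype ((Fin n → F) × (Fin m → F))).toMeasure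
      ((fun ω : ((Fin n → F) × (Fin m → F)) => fun i : ↥R => ω.1 ↑i) ⁻¹' s ∩
        (fun ω : ((Fin n → F) × (Fin m → F)) => ω.1 + Matrix.vecMul ω.2 G) ⁻¹' t)
      = (A : ENNReal) * c⁻¹ := by
    rw [unif_meas _ .of_discrete]
    congr 2
    rw [hA]
    refine congrArg Finset.card (Finset.filter_congr fun ω _ => ?_)
    simp [hhhom, hfhom, hghom, hsF, htF, Finset.mem_product, Set.mem_inter_iff,
      AddMonoidHom.prod_apply]
  have e2 : (PMF.uniformOfFintype ((Fin n → F) × (Fin m → F))).toMeasure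
      ((fun ω : ((Fin n → F) × (Fin m → F)) => fun i : ↥R => ω.1 ↑i) ⁻¹' s) = (Bc : ENNReal) * c⁻¹ := by
    rw [unif_meas _ .of_discrete]
    congr 2
    rw [hBc]
    refine congrArg Finset.card (Finset.filter_congr fun ω _ => ?_)
    simp [hfhom, hsF]
  have e3 : (PMF.uniformOfFintype ((Fin n → F) × (Fin m → F))).toMeasure
      ((fun ω : ((Fin n → F) × (Fin m → F)) => ω.1 + Matrix.vecMul ω.2 G) ⁻¹' t) = (D : ENNReal) * c⁻¹ := by
    rw [unif_meas _ .of_discrete]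
    congr 2
    rw [hD]
    refine congrArg Finset.card (Finset.filter_congr fun ω _ => ?_)
    simp [hghom, htF]
  rw [e1, e2, e3]
  have key' : (A : ENNReal) * c = (Bc : ENNReal) * (D : ENNReal) := by
    rw [hc]
    exact_mod_cast key
  have hN0 : c ≠ 0 := by
    rw [hc]
    exact_mod_cast Fintype.card_ne_zero
  have hNt : c ≠ ⊤ := by rw [hc]; exact ENNReal.natCast_ne_top _
  have hcc : c * c⁻¹ = 1 := ENNReal.mul_inv_cancel hN0 hNt
  calc (A : ENNReal) * c⁻¹ = (A : ENNReal) * 1 * c⁻¹ := by rw [mul_one]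
    _ = (A : ENNReal) * (c * c⁻¹) * c⁻¹ := by rw [hcc]
    _ = ((A : ENNReal) * c) * c⁻¹ * c⁻¹ := by rw [mul_assoc (A : ENNReal) c c⁻¹]
    _ = ((Bc : ENNReal) * (D : ENNReal)) * c⁻¹ * c⁻¹ := by rw [key']
    _ = ((Bc : ENNReal) * c⁻¹) * ((D : ENNReal) * c⁻¹) := by ring
end

section
/- Let m be odd. With G the row-reduced generator matrix of binary RM(1,m) as above, the (m+1)×(m+3) matrix formed by the identity columns I_{m+1}, the column indexed by [m] (which has ones in the first m rows and zero in the last row), and the column indexed by any 2-element subset B of [m] (which has Hamming weight three with a one in the last row), retains rank m+1 after removal of any one column. Hence the minimum 1-information super-set size for RM(1,m) is at most m+3 when m is odd. -/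
/-- `I` is an information set for the code generated by the rows of `G`:
`I` has as many coordinates as `G` has rows, and the columns of `G` indexed by `I`
are linearly independent (equivalently, the square submatrix `G_I` is invertible). -/
def IsInformationSet {F : Type*} [Field F] {ρ ι : Type*} [Fintype ρ]
    (G : Matrix ρ ι F) (I : Finset ι) : Prop :=
  I.card = Fintype.card ρ ∧
    LinearIndependent F (fun j : ↥I => fun i : ρ => G i (j : ι))

/-- `T` is an `S`-information super-set for the code generated by the rows of `G`:
every sub-multiset of `T` of size `|T| - S` contains an information set. -/
def IsInfoSuperSet {F : Type*} [Field F] {ρ ι : Type*} [Fintype ρ]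
    (G : Matrix ρ ι F) (S : ℕ) (T : Multiset ι) : Prop :=
  ∀ W ≤ T, Multiset.card W = Multiset.card T - S →
    ∃ I : Finset ι, I.val ≤ W ∧ IsInformationSet G I

/-- The minimum size of an `S`-information super-set for the code generated by `G`. -/
noncomputable def minSuperSize {F : Type*} [Field F] {ρ ι : Type*} [Fintype ρ]
    (G : Matrix ρ ι F) (S : ℕ) : ℕ :=
  sInf {c | ∃ T : Multiset ι, IsInfoSuperSet G S T ∧ Multiset.card T = c}
/-- The row-reduced generator matrix of the binary first-order Reed–Muller code `RM(1,m)`: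
the matrix `M` of all binary columns of length `m`, with an appended row equal to the
all-one vector plus the sum of the rows of `M`. Columns are indexed by vectors in `F_2^m`. -/
def RM1mat (m : ℕ) : Matrix (Fin (m + 1)) (Fin m → ZMod 2) (ZMod 2) :=
  fun i v => if h : (i : ℕ) < m then v ⟨i, h⟩ else 1 + ∑ j, v j

/-- The multiset of `m+1` columns of `RM1mat m` forming the identity matrix `I_{m+1}`:
the zero column and the standard basis columns. -/
def idCols (m : ℕ) : Multiset (Fin m → ZMod 2) :=
  (0 : Fin m → ZMod 2) ::ₘ
    Multiset.map (fun j : Fin m => fun i => if i = j then 1 else 0) Finset.univ.val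

namespace RMsuper

variable {m : ℕ}

def eV (m : ℕ) (j : Fin m) : Fin m → ZMod 2 := fun i => if i = j then 1 else 0
def uV (m : ℕ) : Fin m → ZMod 2 := fun _ => 1
def wV {m : ℕ} (a b : Fin m) : Fin m → ZMod 2 := fun i => if i = a ∨ i = b then 1 else 0

lemma eV_inj : Function.Injective (eV m) := by
  intro j j' h
  by_contra hne
  have := congrFun h j
  simp [eV, hne] at this

lemma eV_ne_zero (j : Fin m) : eV m j ≠ 0 := by
  intro h
  have := congrFun h j
  simp [eV] at this

lemma single_left_inj {n : ℕ} {k k' : Fin n}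
    (h : (Pi.single k 1 : Fin n → ZMod 2) = Pi.single k' 1) :
    k = k' := by
  by_contra hne
  have := congrFun h k
  rw [Pi.single_eq_same, Pi.single_eq_of_ne hne] at this
  exact one_ne_zero this

lemma castSucc_ne_last (j : Fin m) : j.castSucc ≠ Fin.last m := (Fin.castSucc_lt_last j).ne

lemma sum_eV (j : Fin m) : (∑ i, eV m j i) = 1 := by
  simp [eV, Finset.sum_ite_eq']

lemma natCast_odd (hm : Odd m) : ((m : ZMod 2)) = 1 := by
  obtain ⟨t, rfl⟩ := hm
  push_cast
  rw [show ((2 : ZMod 2)) = 0 from rfl]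
  ring

lemma sum_uV (hm : Odd m) : (∑ i, uV m i) = 1 := by
  simp [uV, Finset.sum_const, Finset.card_univ, natCast_odd hm]

lemma sum_wV {a b : Fin m} (hab : a ≠ b) : (∑ i, wV a b i) = 0 := by
  have h : ∀ i, wV a b i = (if i = a then (1:ZMod 2) else 0) + (if i = b then 1 else 0) := by
    intro i
    by_cases h1 : i = a <;> by_cases h2 : i = b <;> simp_all [wV]
  rw [Finset.sum_congr rfl fun i _ => h i, Finset.sum_add_distrib]
  simp [Finset.sum_ite_eq']
  decide

lemma col_zero : (fun i => RM1mat m i 0) = Pi.single (Fin.last m) 1 := by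
  funext i
  rw [Pi.single_apply]
  unfold RM1mat
  by_cases h : (i : ℕ) < m
  · rw [dif_pos h, if_neg]
    · rfl
    · intro hi; rw [hi] at h; simp [Fin.last] at h
  · rw [dif_neg h, if_pos]
    · simp
    · have := i.isLt; exact Fin.ext (by simp [Fin.last]; omega)

lemma col_eV (j : Fin m) : (fun i => RM1mat m i (eV m j)) = Pi.single j.castSucc 1 := by
  funext i
  rw [Pi.single_apply]
  unfold RM1mat
  by_cases h : (i : ℕ) < m
  · rw [dif_pos h]
    have hiff : ((⟨(i : ℕ), h⟩ : Fin m) = j) ↔ i = j.castSucc := by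
      simp [Fin.ext_iff]
    simp only [eV]
    by_cases hc : i = j.castSucc
    · rw [if_pos (hiff.mpr hc), if_pos hc]
    · rw [if_neg (fun hh => hc (hiff.mp hh)), if_neg hc]
  · rw [dif_neg h, sum_eV, if_neg]
    · decide
    · intro hi; rw [hi] at h; exact h (by simp)

lemma col_u (hm : Odd m) :
    (fun i => RM1mat m i (uV m)) = fun i => if i = Fin.last m then 0 else 1 := by
  funext i
  unfold RM1mat
  by_cases h : (i : ℕ) < m
  · rw [dif_pos h, if_neg]
    · rfl
    · intro hi; rw [hi] at h; simp [Fin.last] at h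
  · rw [dif_neg h, sum_uV hm, if_pos]
    · decide
    · have := i.isLt; exact Fin.ext (by simp [Fin.last]; omega)

lemma col_w {a b : Fin m} (hab : a ≠ b) :
    (fun i => RM1mat m i (wV a b)) =
      fun i => if i = Fin.last m then 1 else
        if i = a.castSucc ∨ i = b.castSucc then 1 else 0 := by
  funext i
  unfold RM1mat
  by_cases h : (i : ℕ) < m
  · rw [dif_pos h, if_neg (fun hi => by rw [hi] at h; simp [Fin.last] at h)]
    simp only [wV]
    have hiff : (((⟨(i : ℕ), h⟩ : Fin m) = a ∨ (⟨(i : ℕ), h⟩ : Fin m) = b))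
        ↔ (i = a.castSucc ∨ i = b.castSucc) := by
      simp [Fin.ext_iff]
    by_cases hc : i = a.castSucc ∨ i = b.castSucc
    · rw [if_pos (hiff.mpr hc), if_pos hc]
    · rw [if_neg (fun hh => hc (hiff.mp hh)), if_neg hc]
  · rw [dif_neg h, sum_wV hab, if_pos]
    · decide
    · have := i.isLt; exact Fin.ext (by simp [Fin.last]; omega)

/-- Linear map used in case B: subtract `x(last)` times the indicator of `{a',b'}`. -/
def LB (m : ℕ) (a b : Fin m) :
    (Fin (m + 1) → ZMod 2) →ₗ[ZMod 2] (Fin (m + 1) → ZMod 2) where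
  toFun x := fun i =>
    x i - x (Fin.last m) * (if i = a.castSucc ∨ i = b.castSucc then 1 else 0)
  map_add' x y := by
    funext i; by_cases h : i = a.castSucc ∨ i = b.castSucc <;> simp [h] <;> ring
  map_smul' c x := by
    funext i; by_cases h : i = a.castSucc ∨ i = b.castSucc <;> simp [h, smul_eq_mul] <;> ring

/-- Linear map used in case C: subtract `x(k')` times the indicator of the castSucc
coordinates other than `k'`. -/
def LC (m : ℕ) (k : Fin m) :
    (Fin (m + 1) → ZMod 2) →ₗ[ZMod 2] (Fin (m + 1) → ZMod 2) where
  toFun x := fun i =>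
    x i - x k.castSucc * (if i = Fin.last m ∨ i = k.castSucc then 0 else 1)
  map_add' x y := by
    funext i; by_cases h : i = Fin.last m ∨ i = k.castSucc <;> simp [h] <;> ring
  map_smul' c x := by
    funext i; by_cases h : i = Fin.last m ∨ i = k.castSucc <;> simp [h, smul_eq_mul] <;> ring

lemma LB_fix {a b : Fin m} (x : Fin (m + 1) → ZMod 2) (hx : x (Fin.last m) = 0) :
    LB m a b x = x := by
  funext i; simp [LB, hx]

lemma LC_fix {k : Fin m} (x : Fin (m + 1) → ZMod 2) (hx : x k.castSucc = 0) :
    LC m k x = x := by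
  funext i; simp [LC, hx]

lemma LB_col_w {a b : Fin m} (hab : a ≠ b) :
    LB m a b (fun i => RM1mat m i (wV a b)) = Pi.single (Fin.last m) 1 := by
  rw [col_w hab]
  funext i
  rw [Pi.single_apply]
  simp only [LB, LinearMap.coe_mk, AddHom.coe_mk]
  by_cases hl : i = Fin.last m
  · have h1 : Fin.last m ≠ a.castSucc := fun h => castSucc_ne_last a h.symm
    have h2 : Fin.last m ≠ b.castSucc := fun h => castSucc_ne_last b h.symm
    simp [hl, h1, h2]
  · by_cases hc : i = a.castSucc ∨ i = b.castSucc
    · simp [hl, hc]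
    · simp [hl, hc]

lemma LC_col_u (hm : Odd m) (k : Fin m) :
    LC m k (fun i => RM1mat m i (uV m)) = Pi.single k.castSucc 1 := by
  rw [col_u hm]
  funext i
  rw [Pi.single_apply]
  simp only [LC, LinearMap.coe_mk, AddHom.coe_mk]
  have hkl : ¬ k.castSucc = Fin.last m := castSucc_ne_last k
  by_cases hl : i = Fin.last m
  · have h1 : Fin.last m ≠ k.castSucc := fun h => hkl h.symm
    simp [hl, h1, hkl]
  · by_cases hc : i = k.castSucc
    · simp [hl, hc, hkl]
    · simp [hl, hc, hkl]

lemma indep_of_single {n : ℕ} {ι : Type*} (f : ι → (Fin n → ZMod 2))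
    (hinj : Function.Injective f) (h : ∀ j, ∃ k, f j = Pi.single k 1) :
    LinearIndependent (ZMod 2) f := by
  choose κ hκ using h
  have hκi : Function.Injective κ := fun x y hxy => hinj (by rw [hκ, hκ, hxy])
  have hf : f = ⇑(Pi.basisFun (ZMod 2) (Fin n)) ∘ κ := by
    funext j
    rw [hκ]
    simp [Pi.basisFun_apply]
  rw [hf]
  exact (Pi.basisFun (ZMod 2) (Fin n)).linearIndependent.comp κ hκi

/-- Generic device: a family together with a linear map sending it to distinct
standard basis vectors, with a recovery function, is linearly independent. -/
lemma indep_via (I : Finset (Fin m → ZMod 2))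
    (L : (Fin (m + 1) → ZMod 2) →ₗ[ZMod 2] (Fin (m + 1) → ZMod 2))
    (recover : Fin (m + 1) → (Fin m → ZMod 2))
    (key : ∀ v : ↥I, ∃ k : Fin (m + 1),
      L (fun i => RM1mat m i ↑v) = Pi.single k 1 ∧ (v : Fin m → ZMod 2) = recover k) :
    LinearIndependent (ZMod 2)
      (fun j : ↥I => fun i : Fin (m + 1) => RM1mat m i (j : Fin m → ZMod 2)) := by
  apply LinearIndependent.of_comp L
  apply indep_of_single
  · intro x y hxy
    obtain ⟨kx, hx, hx2⟩ := key x
    obtain ⟨ky, hy, hy2⟩ := key y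
    have hk : kx = ky := single_left_inj (by rw [← hx, ← hy]; exact hxy)
    apply Subtype.ext
    rw [hx2, hy2, hk]
  · intro v
    obtain ⟨k, hk, _⟩ := key v
    exact ⟨k, hk⟩

lemma cast_castSucc (j : Fin m) (h : ((j.castSucc : Fin (m + 1)) : ℕ) < m) :
    (⟨((j.castSucc : Fin (m + 1)) : ℕ), h⟩ : Fin m) = j := Fin.ext (by simp)

lemma castSucc_lt (j : Fin m) : ((j.castSucc : Fin (m + 1)) : ℕ) < m := by simp

lemma not_last_lt : ¬ ((Fin.last m : Fin (m + 1)) : ℕ) < m := by simp [Fin.last]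

lemma idCols_eq : idCols m = (0 : Fin m → ZMod 2) ::ₘ Multiset.map (eV m) Finset.univ.val := rfl

lemma idCols_nodup : (idCols m).Nodup := by
  rw [idCols_eq]
  refine Multiset.nodup_cons.mpr ⟨?_, Finset.univ.nodup.map eV_inj⟩
  simp only [Multiset.mem_map]
  rintro ⟨j, -, hj⟩
  exact eV_ne_zero j hj

lemma infoA (m : ℕ) : ∃ I : Finset (Fin m → ZMod 2),
    I.val = idCols m ∧ IsInformationSet (RM1mat m) I := by
  refine ⟨⟨idCols m, idCols_nodup⟩, rfl, ?_, ?_⟩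
  · show Multiset.card (idCols m) = Fintype.card (Fin (m + 1))
    simp [idCols]
  · apply indep_via _ LinearMap.id
      (fun k => if h : (k : ℕ) < m then eV m ⟨(k : ℕ), h⟩ else 0)
    rintro ⟨v, hv⟩
    rw [Finset.mem_mk, idCols_eq, Multiset.mem_cons] at hv
    rcases hv with rfl | hv
    · refine ⟨Fin.last m, ?_, ?_⟩
      · simpa using (col_zero (m := m))
      · rw [dif_neg not_last_lt]
    · rw [Multiset.mem_map] at hv
      obtain ⟨j, -, rfl⟩ := hv
      refine ⟨j.castSucc, ?_, ?_⟩
      · simpa using (col_eV j)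
      · rw [dif_pos (castSucc_lt j), cast_castSucc]

lemma infoB (m : ℕ) (a b : Fin m) (hab : a ≠ b) (hw : ∀ j, wV a b ≠ eV m j) :
    ∃ I : Finset (Fin m → ZMod 2),
      I.val = wV a b ::ₘ Multiset.map (eV m) Finset.univ.val ∧
        IsInformationSet (RM1mat m) I := by
  have hnodup : (wV a b ::ₘ Multiset.map (eV m) Finset.univ.val).Nodup := by
    refine Multiset.nodup_cons.mpr ⟨?_, Finset.univ.nodup.map eV_inj⟩
    simp only [Multiset.mem_map]
    rintro ⟨j, -, hj⟩
    exact hw j hj.symm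
  refine ⟨⟨_, hnodup⟩, rfl, ?_, ?_⟩
  · show Multiset.card _ = Fintype.card (Fin (m + 1))
    simp
  · apply indep_via _ (LB m a b)
      (fun k => if h : (k : ℕ) < m then eV m ⟨(k : ℕ), h⟩ else wV a b)
    rintro ⟨v, hv⟩
    rw [Finset.mem_mk, Multiset.mem_cons] at hv
    rcases hv with rfl | hv
    · refine ⟨Fin.last m, LB_col_w hab, ?_⟩
      rw [dif_neg not_last_lt]
    · rw [Multiset.mem_map] at hv
      obtain ⟨j, -, rfl⟩ := hv
      refine ⟨j.castSucc, ?_, ?_⟩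
      · rw [show (fun i => RM1mat m i (eV m j)) = Pi.single j.castSucc 1 from col_eV j]
        exact LB_fix _ (Pi.single_eq_of_ne (Ne.symm (castSucc_ne_last j)) 1)
      · rw [dif_pos (castSucc_lt j), cast_castSucc]

lemma infoC (m : ℕ) (hm : Odd m) (k₀ : Fin m) (h1 : uV m ≠ 0) (h2 : ∀ j, uV m ≠ eV m j) :
    ∃ I : Finset (Fin m → ZMod 2),
      I.val = uV m ::ₘ (0 : Fin m → ZMod 2) ::ₘ
          Multiset.map (eV m) (Finset.univ.erase k₀).val ∧
        IsInformationSet (RM1mat m) I := by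
  have hnodup : (uV m ::ₘ (0 : Fin m → ZMod 2) ::ₘ
      Multiset.map (eV m) (Finset.univ.erase k₀).val).Nodup := by
    refine Multiset.nodup_cons.mpr ⟨?_, Multiset.nodup_cons.mpr ⟨?_, ?_⟩⟩
    · simp only [Multiset.mem_cons, Multiset.mem_map]
      rintro (h | ⟨j, -, hj⟩)
      · exact h1 h
      · exact h2 j hj.symm
    · simp only [Multiset.mem_map]
      rintro ⟨j, -, hj⟩
      exact eV_ne_zero j hj
    · exact (Finset.univ.erase k₀).nodup.map eV_inj
  refine ⟨⟨_, hnodup⟩, rfl, ?_, ?_⟩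
  · show Multiset.card _ = Fintype.card (Fin (m + 1))
    have hm1 : 1 ≤ m := hm.pos
    simp [Finset.card_erase_of_mem, Fintype.card_fin]
    omega
  · apply indep_via _ (LC m k₀)
      (fun k => if h : (k : ℕ) < m then
        (if (⟨(k : ℕ), h⟩ : Fin m) = k₀ then uV m else eV m ⟨(k : ℕ), h⟩) else 0)
    rintro ⟨v, hv⟩
    rw [Finset.mem_mk, Multiset.mem_cons, Multiset.mem_cons] at hv
    rcases hv with rfl | rfl | hv
    · refine ⟨k₀.castSucc, LC_col_u hm k₀, ?_⟩
      rw [dif_pos (castSucc_lt k₀), if_pos (cast_castSucc k₀ _)]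
    · refine ⟨Fin.last m, ?_, ?_⟩
      · rw [show (fun i => RM1mat m i (0 : Fin m → ZMod 2)) = Pi.single (Fin.last m) 1
            from col_zero]
        exact LC_fix _ (Pi.single_eq_of_ne (castSucc_ne_last k₀) 1)
      · rw [dif_neg not_last_lt]
    · rw [Multiset.mem_map] at hv
      obtain ⟨j, hj, rfl⟩ := hv
      have hjk : j ≠ k₀ := (Finset.mem_erase.mp (Finset.mem_val.mp hj)).1
      refine ⟨j.castSucc, ?_, ?_⟩
      · rw [show (fun i => RM1mat m i (eV m j)) = Pi.single j.castSucc 1 from col_eV j]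
        refine LC_fix _ (Pi.single_eq_of_ne ?_ 1)
        exact fun h => hjk (Fin.castSucc_injective m h).symm
      · rw [dif_pos (castSucc_lt j)]
        rw [if_neg (by rw [cast_castSucc]; exact hjk), cast_castSucc]

end RMsuper

open RMsuper in
/-- For odd `m`, the `m+3` columns of the generator matrix of binary `RM(1,m)` given by
the identity columns `I_{m+1}`, the column indexed by `[m]` (the all-one input), and the
column indexed by a 2-element subset `B = {a,b}` of `[m]`, retain rank `m+1` after
removal of any one column; i.e., they form a `1`-information super-set. Hence the minimum
`1`-information super-set size for `RM(1,m)` is at most `m+3` when `m` is odd. -/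
theorem rm1_odd_superset (m : ℕ) (hm : Odd m) (a b : Fin m) (hab : a ≠ b) :
    IsInfoSuperSet (RM1mat m) 1
      ((fun _ => (1 : ZMod 2)) ::ₘ
        (fun i => if i = a ∨ i = b then (1 : ZMod 2) else 0) ::ₘ idCols m) ∧
      minSuperSize (RM1mat m) 1 ≤ m + 3 := by
  classical
  have hm3 : 3 ≤ m := by
    have h2 : 1 < Fintype.card (Fin m) := Fintype.one_lt_card_iff_nontrivial.mpr ⟨a, b, hab⟩
    rw [Fintype.card_fin] at h2
    obtain ⟨t, ht⟩ := hm
    omega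
  have hTeq : ((fun _ => (1 : ZMod 2)) ::ₘ
      (fun i => if i = a ∨ i = b then (1 : ZMod 2) else 0) ::ₘ idCols m)
      = uV m ::ₘ wV a b ::ₘ (0 : Fin m → ZMod 2) ::ₘ Multiset.map (eV m) Finset.univ.val :=
    rfl
  -- a coordinate outside {a, b}
  obtain ⟨c, hca, hcb⟩ : ∃ c : Fin m, c ≠ a ∧ c ≠ b := by
    have hne : (({a, b} : Finset (Fin m))ᶜ).Nonempty := by
      rw [← Finset.card_pos, Finset.card_compl]
      have hle : ({a, b} : Finset (Fin m)).card ≤ 2 :=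
        le_trans (Finset.card_insert_le _ _) (by simp)
      simp only [Fintype.card_fin]
      omega
    obtain ⟨c, hc⟩ := hne
    simp only [Finset.mem_compl, Finset.mem_insert, Finset.mem_singleton, not_or] at hc
    exact ⟨c, hc.1, hc.2⟩
  -- inequality facts
  have huw : uV m ≠ wV a b := fun h => by
    have := congrFun h c
    simp [uV, wV, hca, hcb] at this
  have hu0 : uV m ≠ 0 := fun h => by
    have := congrFun h a
    simp [uV] at this
  have hue : ∀ j, uV m ≠ eV m j := by
    intro j h
    haveI : Nontrivial (Fin m) := ⟨a, b, hab⟩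
    obtain ⟨j', hj'⟩ := exists_ne j
    have := congrFun h j'
    simp [uV, eV, hj'] at this
  have hw0 : wV a b ≠ 0 := fun h => by
    have := congrFun h a
    simp [wV] at this
  have hwe : ∀ j, wV a b ≠ eV m j := by
    intro j h
    by_cases hja : j = a
    · subst hja
      have := congrFun h b
      simp only [wV, eV] at this
      simp [Ne.symm hab] at this
    · have := congrFun h a
      simp only [wV, eV] at this
      simp [Ne.symm hja] at this
  have hcT : Multiset.card ((fun _ => (1 : ZMod 2)) ::ₘ
      (fun i => if i = a ∨ i = b then (1 : ZMod 2) else 0) ::ₘ idCols m) = m + 3 := by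
    rw [hTeq]
    simp [Finset.card_univ]
  have part1 : IsInfoSuperSet (RM1mat m) 1
      ((fun _ => (1 : ZMod 2)) ::ₘ
        (fun i => if i = a ∨ i = b then (1 : ZMod 2) else 0) ::ₘ idCols m) := by
    intro W hW hcard
    rw [hcT] at hcard
    rw [hTeq] at hW
    have hsub : Multiset.card
        ((uV m ::ₘ wV a b ::ₘ (0 : Fin m → ZMod 2) ::ₘ
          Multiset.map (eV m) Finset.univ.val) - W) = 1 := by
      rw [Multiset.card_sub hW, ← hTeq, hcT]
      omega
    obtain ⟨x, hx⟩ := Multiset.card_eq_one.mp hsub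
    have hTx : uV m ::ₘ wV a b ::ₘ (0 : Fin m → ZMod 2) ::ₘ
        Multiset.map (eV m) Finset.univ.val = x ::ₘ W := by
      conv_lhs => rw [← tsub_add_cancel_of_le hW]
      rw [hx, Multiset.singleton_add]
    have hW' : W = (uV m ::ₘ wV a b ::ₘ (0 : Fin m → ZMod 2) ::ₘ
        Multiset.map (eV m) Finset.univ.val).erase x := by
      rw [hTx, Multiset.erase_cons_head]
    have hxT : x ∈ uV m ::ₘ wV a b ::ₘ (0 : Fin m → ZMod 2) ::ₘ
        Multiset.map (eV m) Finset.univ.val := by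
      rw [hTx]; exact Multiset.mem_cons_self x W
    simp only [Multiset.mem_cons, Multiset.mem_map] at hxT
    rcases hxT with rfl | rfl | rfl | ⟨k, -, rfl⟩
    · -- removed column: all-ones
      obtain ⟨I, hIv, hInfo⟩ := infoA m
      refine ⟨I, ?_, hInfo⟩
      rw [hIv, hW', Multiset.erase_cons_head, idCols_eq]
      exact Multiset.le_cons_self _ _
    · -- removed column: the weight-2 index
      obtain ⟨I, hIv, hInfo⟩ := infoA m
      refine ⟨I, ?_, hInfo⟩
      rw [hIv, hW', Multiset.erase_cons_tail _ huw, Multiset.erase_cons_head, idCols_eq]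
      exact Multiset.le_cons_self _ _
    · -- removed column: zero
      obtain ⟨I, hIv, hInfo⟩ := infoB m a b hab hwe
      refine ⟨I, ?_, hInfo⟩
      rw [hIv, hW', Multiset.erase_cons_tail _ hu0,
        Multiset.erase_cons_tail _ hw0, Multiset.erase_cons_head]
      exact Multiset.le_cons_self _ _
    · -- removed column: a standard basis index
      obtain ⟨I, hIv, hInfo⟩ := infoC m hm k hu0 hue
      refine ⟨I, ?_, hInfo⟩
      rw [hIv, hW', Multiset.erase_cons_tail _ (hue k),
        Multiset.erase_cons_tail _ (hwe k),
        Multiset.erase_cons_tail _ (fun h => eV_ne_zero k h.symm),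
        ← Multiset.map_erase (eV m) eV_inj, ← Finset.erase_val]
      refine Multiset.cons_le_cons _ ?_
      exact Multiset.le_cons_self _ _
  exact ⟨part1, Nat.sInf_le ⟨_, part1, hcT⟩⟩
end

section
/- For every m ≥ 4 there exists a 2-information super-set for the binary Reed-Muller code RM(1,m) of size 2m+1. That is, there is a multiset T of 2m+1 coordinates of RM(1,m) such that every (2m−1)-subset of T contains m+1 coordinates at which the columns of a generator matrix of RM(1,m) are linearly independent. -/
set_option linter.unusedVariables false

namespace RMaux

def pcol (m a b : ℕ) : Fin m → ZMod 2 := fun i => if (i:ℕ) = a ∨ (i:ℕ) = b then 1 else 0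
def canon (m : ℕ) (i : Fin (m+1)) : Fin m → ZMod 2 := fun j => if (j:ℕ) = (i:ℕ) then 1 else 0
def pa (m k : ℕ) : ℕ := if k = 0 then 0 else if k = 1 then m-2 else k-2
def pb (m k : ℕ) : ℕ := if k = 0 then 1 else if k = 1 then m-1 else k
def pck (m : ℕ) (k : Fin m) : Fin m → ZMod 2 := pcol m (pa m k) (pb m k)
def Tms (m : ℕ) : Multiset (Fin m → ZMod 2) := idCols m + Multiset.map (pck m) Finset.univ.val

variable {m : ℕ}

lemma pab_lt (hm : 4 ≤ m) {k : ℕ} (hk : k < m) : pa m k < pb m k ∧ pb m k < m := by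
  unfold pa pb; split_ifs <;> omega

lemma pab_inj (hm : 4 ≤ m) {k1 k2 : ℕ} (h1 : k1 < m) (h2 : k2 < m)
    (ha : pa m k1 = pa m k2) (hb : pb m k1 = pb m k2) : k1 = k2 := by
  unfold pa at ha; unfold pb at hb; split_ifs at ha hb <;> omega

lemma pa0 : pa m 0 = 0 := rfl
lemma pb0 : pb m 0 = 1 := rfl
lemma pa1 : pa m 1 = m - 2 := rfl
lemma pb1 : pb m 1 = m - 1 := rfl
lemma pa2 {k : ℕ} (hk : 2 ≤ k) : pa m k = k - 2 := by unfold pa; split_ifs <;> omega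
lemma pb2 {k : ℕ} (hk : 2 ≤ k) : pb m k = k := by unfold pb; split_ifs <;> omega

end RMaux
namespace RMaux
variable {m : ℕ}

/-- For each `x < m` there are two distinct pairs containing `x` whose intersection is `{x}`. -/
lemma cover (hm : 4 ≤ m) {x : ℕ} (hx : x < m) :
    ∃ k1 k2, k1 < m ∧ k2 < m ∧ k1 ≠ k2 ∧
      (pa m k1 = x ∨ pb m k1 = x) ∧ (pa m k2 = x ∨ pb m k2 = x) ∧
      ∀ y, y ≠ x →
        ¬((pa m k1 = y ∨ pb m k1 = y) ∧ (pa m k2 = y ∨ pb m k2 = y)) := by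
  rcases eq_or_ne x 0 with rfl | hx0
  · exact ⟨0, 2, by omega, by omega, by omega,
      Or.inl pa0, Or.inl (by rw [pa2 (by omega)]),
      fun y hy h => by rw [pa0, pb0, pa2 (le_refl 2), pb2 (le_refl 2)] at h; omega⟩
  rcases eq_or_ne x 1 with rfl | hx1
  · exact ⟨0, 3, by omega, by omega, by omega,
      Or.inr pb0, Or.inl (by rw [pa2 (by omega)]),
      fun y hy h => by rw [pa0, pb0, pa2 (by omega : 2 ≤ 3), pb2 (by omega : 2 ≤ 3)] at h; omega⟩
  rcases eq_or_ne x (m-1) with rfl | hxm1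
  · exact ⟨1, m-1, by omega, by omega, by omega,
      Or.inr pb1, Or.inr (by rw [pb2 (by omega)]),
      fun y hy h => by rw [pa1, pb1, pa2 (by omega), pb2 (by omega)] at h; omega⟩
  rcases eq_or_ne x (m-2) with rfl | hxm2
  · exact ⟨1, m-2, by omega, by omega, by omega,
      Or.inl pa1, Or.inr (by rw [pb2 (by omega)]),
      fun y hy h => by rw [pa1, pb1, pa2 (by omega), pb2 (by omega)] at h; omega⟩
  · exact ⟨x, x+2, by omega, by omega, by omega,
      Or.inr (by rw [pb2 (by omega)]), Or.inl (by rw [pa2 (by omega)]; omega),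
      fun y hy h => by rw [pa2 (by omega), pb2 (by omega), pa2 (by omega), pb2 (by omega)] at h; omega⟩
end RMaux
namespace RMaux
variable {m : ℕ}

lemma sum_ind {a : ℕ} (ha : a < m) :
    (∑ j : Fin m, if (j:ℕ) = a then (1 : ZMod 2) else 0) = 1 := by
  have : ∀ j : Fin m, (if (j:ℕ) = a then (1 : ZMod 2) else 0)
      = if j = ⟨a, ha⟩ then (1 : ZMod 2) else 0 := by
    intro j; congr 1; simp [Fin.ext_iff]
  rw [Finset.sum_congr rfl (fun j _ => this j), Finset.sum_ite_eq' Finset.univ]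
  simp

lemma col_canon (i : Fin (m+1)) (r : Fin (m+1)) :
    RM1mat m r (canon m i) = if r = i then 1 else 0 := by
  unfold RM1mat canon
  by_cases h : (r:ℕ) < m
  · rw [dif_pos h]
    simp only [Fin.ext_iff]
  · rw [dif_neg h]
    have hr : (r:ℕ) = m := by omega
    by_cases hi : (i:ℕ) < m
    · have : (∑ j : Fin m, if (j:ℕ) = (i:ℕ) then (1 : ZMod 2) else 0) = 1 := sum_ind hi
      rw [this, if_neg (by simp [Fin.ext_iff]; omega)]
      decide
    · have hi' : (i:ℕ) = m := by omega
      have : (∑ j : Fin m, if (j:ℕ) = (i:ℕ) then (1 : ZMod 2) else 0) = 0 := by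
        apply Finset.sum_eq_zero; intro j _
        rw [if_neg (by omega)]
      rw [this, if_pos (by simp [Fin.ext_iff]; omega)]
      decide

lemma col_pcol {a b : ℕ} (hab : a < b) (hb : b < m) (r : Fin (m+1)) :
    RM1mat m r (pcol m a b) =
      if (r:ℕ) = a ∨ (r:ℕ) = b ∨ (r:ℕ) = m then 1 else 0 := by
  unfold RM1mat pcol
  by_cases h : (r:ℕ) < m
  · rw [dif_pos h]
    by_cases h1 : (r:ℕ) = a ∨ (r:ℕ) = b
    · rw [if_pos h1, if_pos (by tauto)]
    · rw [if_neg h1, if_neg (by omega)]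
  · rw [dif_neg h]
    have hr : (r:ℕ) = m := by omega
    have hsplit : ∀ j : Fin m, (if (j:ℕ) = a ∨ (j:ℕ) = b then (1 : ZMod 2) else 0)
        = (if (j:ℕ) = a then (1:ZMod 2) else 0) + (if (j:ℕ) = b then (1:ZMod 2) else 0) := by
      intro j
      by_cases h1 : (j:ℕ) = a <;> by_cases h2 : (j:ℕ) = b <;> simp [h1, h2] <;> omega
    rw [Finset.sum_congr rfl (fun j _ => hsplit j), Finset.sum_add_distrib,
      sum_ind (by omega), sum_ind hb, if_pos (by omega)]
    decide

lemma canon_inj : Function.Injective (canon m) := by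
  intro i j hij
  by_cases hi : (i:ℕ) < m
  · have := congrFun hij ⟨i, hi⟩
    unfold canon at this
    rw [if_pos rfl] at this
    by_cases h : (i:ℕ) = (j:ℕ)
    · exact Fin.ext h
    · rw [if_neg h] at this; exact absurd this one_ne_zero
  · by_cases hj : (j:ℕ) < m
    · have := congrFun hij ⟨j, hj⟩
      unfold canon at this
      rw [if_pos rfl, if_neg (by omega)] at this
      exact absurd this.symm one_ne_zero
    · exact Fin.ext (by omega)

lemma pcol_ne_canon {a b : ℕ} (hab : a < b) (hb : b < m) (i : Fin (m+1)) :
    pcol m a b ≠ canon m i := by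
  intro h
  have h1 := congrFun h ⟨a, by omega⟩
  have h2 := congrFun h ⟨b, hb⟩
  unfold pcol canon at h1 h2
  rw [if_pos (Or.inl rfl)] at h1
  rw [if_pos (Or.inr rfl)] at h2
  by_cases ha' : a = (i:ℕ)
  · rw [if_neg (by simp only [Fin.val_mk]; omega)] at h2; exact absurd h2 one_ne_zero
  · rw [if_neg ha'] at h1; exact absurd h1 one_ne_zero

lemma pcol_inj {a b a' b' : ℕ} (hab : a < b) (hb : b < m) (hab' : a' < b') (hb' : b' < m)
    (h : pcol m a b = pcol m a' b') : a = a' ∧ b = b' := by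
  have e : ∀ x : ℕ, (hx : x < m) → ((x = a ∨ x = b) ↔ (x = a' ∨ x = b')) := by
    intro x hx
    have := congrFun h ⟨x, hx⟩
    unfold pcol at this
    simp only at this
    constructor <;> intro h1
    · by_contra h2; rw [if_pos h1, if_neg h2] at this; exact absurd this one_ne_zero
    · by_contra h2; rw [if_neg h2, if_pos h1] at this; exact absurd this.symm one_ne_zero
  have e1 := (e a (by omega)).mp (Or.inl rfl)
  have e2 := (e b hb).mp (Or.inr rfl)
  have e3 := (e a' (by omega)).mpr (Or.inl rfl)
  have e4 := (e b' hb').mpr (Or.inr rfl)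
  omega

lemma pck_inj (hm : 4 ≤ m) : Function.Injective (pck m) := by
  intro k1 k2 h
  have h1 := pab_lt hm k1.2
  have h2 := pab_lt hm k2.2
  have := pcol_inj h1.1 h1.2 h2.1 h2.2 h
  exact Fin.ext (pab_inj hm k1.2 k2.2 this.1 this.2)

end RMaux
namespace RMaux
variable {m : ℕ}

lemma canon_last : canon m ⟨m, Nat.lt_succ_self m⟩ = 0 := by
  funext j; unfold canon
  rw [if_neg (by simp only [Fin.val_mk]; omega)]; rfl

lemma canon_castSucc (j : Fin m) :
    canon m (Fin.castSucc j) = fun i => if i = j then 1 else 0 := by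
  funext i; unfold canon; simp [Fin.ext_iff]

lemma mem_idCols_iff (x : Fin m → ZMod 2) :
    x ∈ idCols m ↔ ∃ i, x = canon m i := by
  unfold idCols
  rw [Multiset.mem_cons, Multiset.mem_map]
  constructor
  · rintro (rfl | ⟨j, _, rfl⟩)
    · exact ⟨⟨m, Nat.lt_succ_self m⟩, canon_last.symm⟩
    · exact ⟨Fin.castSucc j, (canon_castSucc j).symm⟩
  · rintro ⟨i, rfl⟩
    by_cases h : (i:ℕ) < m
    · right
      refine ⟨⟨i, h⟩, ?_, ?_⟩
      · simp
      · rw [← canon_castSucc ⟨i, h⟩]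
        congr 1
    · left
      have hi : i = ⟨m, Nat.lt_succ_self m⟩ := Fin.ext (by simp only [Fin.val_mk]; omega)
      rw [hi, canon_last]

lemma canon_mem_T (i : Fin (m+1)) : canon m i ∈ Tms m :=
  Multiset.mem_add.mpr (Or.inl ((mem_idCols_iff _).mpr ⟨i, rfl⟩))

lemma pck_mem_T (k : Fin m) : pck m k ∈ Tms m := by
  refine Multiset.mem_add.mpr (Or.inr ?_)
  rw [Multiset.mem_map]
  exact ⟨k, by simp, rfl⟩

lemma mem_T_classify {x : Fin m → ZMod 2} (hx : x ∈ Tms m) :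
    (∃ i, x = canon m i) ∨ ∃ k : Fin m, x = pck m k := by
  rcases Multiset.mem_add.mp hx with h | h
  · exact Or.inl ((mem_idCols_iff x).mp h)
  · rw [Multiset.mem_map] at h
    obtain ⟨k, _, rfl⟩ := h
    exact Or.inr ⟨k, rfl⟩

lemma card_T : Multiset.card (Tms m) = 2 * m + 1 := by
  unfold Tms idCols
  simp
  omega

end RMaux

namespace RMaux
variable {m : ℕ}

lemma li_aux1 {n : ℕ} (w : Fin n → (Fin n → ZMod 2)) (k : Fin n)
    (hw : ∀ i, i ≠ k → ∀ r, w i r = if r = i then 1 else 0)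
    (hkk : w k k = 1) : LinearIndependent (ZMod 2) w := by
  rw [Fintype.linearIndependent_iff]
  intro g hsum
  have hS : ∀ r, ∑ i, g i * w i r = 0 := by
    intro r
    have := congrFun hsum r
    simpa using this
  have hgk : g k = 0 := by
    have := hS k
    rwa [Finset.sum_eq_single k
      (fun i _ hik => by rw [hw i hik k, if_neg (fun h => hik h.symm), mul_zero])
      (fun h => absurd (Finset.mem_univ k) h), hkk, mul_one] at this
  intro i
  by_cases hik : i = k
  · rw [hik]; exact hgk
  · have := hS i
    rwa [Finset.sum_eq_single i
      (fun j _ hji => by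
        by_cases hjk : j = k
        · rw [hjk, hgk, zero_mul]
        · rw [hw j hjk i, if_neg (fun h => hji h.symm), mul_zero])
      (fun h => absurd (Finset.mem_univ i) h), hw i hik i, if_pos rfl, mul_one] at this

lemma li_aux2 {n : ℕ} (w : Fin n → (Fin n → ZMod 2)) (k l : Fin n) (hkl : k ≠ l)
    (hw : ∀ i, i ≠ k → i ≠ l → ∀ r, w i r = if r = i then 1 else 0)
    (hkk : w k k = 1) (hkl0 : w k l = 0) (hll : w l l = 1) :
    LinearIndependent (ZMod 2) w := by
  rw [Fintype.linearIndependent_iff]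
  intro g hsum
  have hS : ∀ r, ∑ i, g i * w i r = 0 := by
    intro r
    have := congrFun hsum r
    simpa using this
  have hgl : g l = 0 := by
    have := hS l
    rwa [Finset.sum_eq_single l
      (fun i _ hil => by
        by_cases hik : i = k
        · rw [hik, hkl0, mul_zero]
        · rw [hw i hik hil l, if_neg (fun h => hil h.symm), mul_zero])
      (fun h => absurd (Finset.mem_univ l) h), hll, mul_one] at this
  have hgk : g k = 0 := by
    have := hS k
    rwa [Finset.sum_eq_single k
      (fun i _ hik => by
        by_cases hil : i = l
        · rw [hil, hgl, zero_mul]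
        · rw [hw i hik hil k, if_neg (fun h => hik h.symm), mul_zero])
      (fun h => absurd (Finset.mem_univ k) h), hkk, mul_one] at this
  intro i
  by_cases hik : i = k
  · rw [hik]; exact hgk
  by_cases hil : i = l
  · rw [hil]; exact hgl
  have := hS i
  rwa [Finset.sum_eq_single i
    (fun j _ hji => by
      by_cases hjk : j = k
      · rw [hjk, hgk, zero_mul]
      by_cases hjl : j = l
      · rw [hjl, hgl, zero_mul]
      · rw [hw j hjk hjl i, if_neg (fun h => hji h.symm), mul_zero])
    (fun h => absurd (Finset.mem_univ i) h), hw i hik hil i, if_pos rfl, mul_one] at this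

lemma isInfo_of (V : Fin (m+1) → (Fin m → ZMod 2)) (hinj : Function.Injective V)
    (hli : LinearIndependent (ZMod 2) fun i => fun r : Fin (m+1) => RM1mat m r (V i)) :
    IsInformationSet (RM1mat m) (Finset.image V Finset.univ) := by
  constructor
  · rw [Finset.card_image_of_injective _ hinj]
    simp
  · set I := Finset.image V Finset.univ with hI
    have hmem : ∀ i, V i ∈ I := fun i => Finset.mem_image_of_mem V (Finset.mem_univ i)
    have hbij : Function.Bijective (fun i : Fin (m+1) => (⟨V i, hmem i⟩ : ↥I)) := by
      constructor
      · intro a b hab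
        exact hinj (congrArg Subtype.val hab)
      · rintro ⟨x, hx⟩
        obtain ⟨i, _, rfl⟩ := Finset.mem_image.mp hx
        exact ⟨i, rfl⟩
    exact (linearIndependent_equiv (Equiv.ofBijective _ hbij)).mp hli

end RMaux

namespace RMaux
variable {m : ℕ}

lemma pck_ne_canon (hm : 4 ≤ m) (k : Fin m) (i : Fin (m+1)) : pck m k ≠ canon m i :=
  pcol_ne_canon (pab_lt hm k.2).1 (pab_lt hm k.2).2 i

lemma col_pck (hm : 4 ≤ m) (k : Fin m) (r : Fin (m+1)) :
    RM1mat m r (pck m k) =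
      if (r:ℕ) = pa m k ∨ (r:ℕ) = pb m k ∨ (r:ℕ) = m then 1 else 0 :=
  col_pcol (pab_lt hm k.2).1 (pab_lt hm k.2).2 r

lemma choose_pair (hm : 4 ≤ m) (x : ℕ) (hx : x < m) (bad : Fin m → ZMod 2) :
    ∃ k : Fin m, (pa m ↑k = x ∨ pb m ↑k = x) ∧ pck m k ≠ bad := by
  obtain ⟨k1, k2, h1, h2, hne, hc1, hc2, -⟩ := cover hm hx
  by_cases h : pck m ⟨k1, h1⟩ = bad
  · refine ⟨⟨k2, h2⟩, hc2, fun hh => ?_⟩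
    exact hne (congrArg Fin.val (pck_inj hm (hh.trans h.symm)).symm)
  · exact ⟨⟨k1, h1⟩, hc1, h⟩

/-- Choose a pair containing `x` and avoiding `z`. -/
lemma choose_pair_avoid (hm : 4 ≤ m) (x z : ℕ) (hx : x < m) (hz : z ≠ x) :
    ∃ k : Fin m, (pa m ↑k = x ∨ pb m ↑k = x) ∧ ¬(pa m ↑k = z ∨ pb m ↑k = z) := by
  obtain ⟨k1, k2, h1, h2, hne, hc1, hc2, hint⟩ := cover hm hx
  by_cases h : pa m k1 = z ∨ pb m k1 = z
  · refine ⟨⟨k2, h2⟩, hc2, fun hh => hint z hz ⟨h, hh⟩⟩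
  · exact ⟨⟨k1, h1⟩, hc1, h⟩

lemma finset_le {α : Type*} {s : Finset α} {W : Multiset α} (h : ∀ x ∈ s, x ∈ W) :
    s.val ≤ W :=
  (Multiset.le_iff_subset s.nodup).mpr h

lemma case_repl1 (k : Fin (m+1)) (c : Fin m → ZMod 2) (hc : ∃ kk : Fin m, c = pck m kk)
    (hm : 4 ≤ m)
    (hck : RM1mat m k c = 1)
    (W : Multiset (Fin m → ZMod 2)) (hcW : c ∈ W)
    (hcanW : ∀ i : Fin (m+1), i ≠ k → canon m i ∈ W) :
    ∃ I : Finset (Fin m → ZMod 2), I.val ≤ W ∧ IsInformationSet (RM1mat m) I := by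
  obtain ⟨kk, rfl⟩ := hc
  set V : Fin (m+1) → (Fin m → ZMod 2) := fun i => if i = k then pck m kk else canon m i
    with hV
  have hinj : Function.Injective V := by
    intro a b hab
    simp only [hV] at hab
    by_cases ha : a = k <;> by_cases hb : b = k
    · rw [ha, hb]
    · rw [if_pos ha, if_neg hb] at hab; exact absurd hab (pck_ne_canon hm kk b)
    · rw [if_neg ha, if_pos hb] at hab; exact absurd hab.symm (pck_ne_canon hm kk a)
    · rw [if_neg ha, if_neg hb] at hab; exact canon_inj hab
  refine ⟨Finset.image V Finset.univ, finset_le ?_, isInfo_of V hinj ?_⟩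
  · intro x hx
    obtain ⟨i, -, rfl⟩ := Finset.mem_image.mp hx
    by_cases hik : i = k
    · simpa [hV, hik] using hcW
    · simpa [hV, hik] using hcanW i hik
  · apply li_aux1 _ k
    · intro i hik r
      simp only [hV, if_neg hik]
      exact col_canon i r
    · simpa [hV] using hck

lemma case_repl2 (k l : Fin (m+1)) (hkl : k ≠ l) (c d : Fin m → ZMod 2)
    (hc : ∃ kk : Fin m, c = pck m kk) (hd : ∃ kk : Fin m, d = pck m kk)
    (hm : 4 ≤ m)
    (hck : RM1mat m k c = 1) (hcl : RM1mat m l c = 0) (hdl : RM1mat m l d = 1)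
    (W : Multiset (Fin m → ZMod 2)) (hcW : c ∈ W) (hdW : d ∈ W)
    (hcanW : ∀ i : Fin (m+1), i ≠ k → i ≠ l → canon m i ∈ W) :
    ∃ I : Finset (Fin m → ZMod 2), I.val ≤ W ∧ IsInformationSet (RM1mat m) I := by
  have hcd : c ≠ d := by
    intro h
    rw [h, hdl] at hcl
    exact one_ne_zero (α := ZMod 2) hcl
  set V : Fin (m+1) → (Fin m → ZMod 2) :=
    fun i => if i = k then c else if i = l then d else canon m i with hV
  have hVk : V k = c := by simp [hV]
  have hVl : V l = d := by simp [hV, hkl.symm]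
  have hVo : ∀ i, i ≠ k → i ≠ l → V i = canon m i := by
    intro i h1 h2; simp [hV, h1, h2]
  have hinj : Function.Injective V := by
    intro a b hab
    obtain ⟨kc, hkc⟩ := hc
    obtain ⟨kd, hkd⟩ := hd
    by_cases ha : a = k
    · by_cases hb : b = k
      · rw [ha, hb]
      by_cases hb' : b = l
      · rw [ha, hb', hVk, hVl] at hab; exact absurd hab hcd
      · rw [ha, hVk, hVo b hb hb', hkc] at hab
        exact absurd hab (pck_ne_canon hm kc b)
    by_cases ha' : a = l
    · by_cases hb : b = k
      · rw [ha', hb, hVl, hVk] at hab; exact absurd hab.symm hcd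
      by_cases hb' : b = l
      · rw [ha', hb']
      · rw [ha', hVl, hVo b hb hb', hkd] at hab
        exact absurd hab (pck_ne_canon hm kd b)
    · by_cases hb : b = k
      · rw [hb, hVk, hVo a ha ha', hkc] at hab
        exact absurd hab.symm (pck_ne_canon hm kc a)
      by_cases hb' : b = l
      · rw [hb', hVl, hVo a ha ha', hkd] at hab
        exact absurd hab.symm (pck_ne_canon hm kd a)
      · rw [hVo a ha ha', hVo b hb hb'] at hab
        exact canon_inj hab
  refine ⟨Finset.image V Finset.univ, finset_le ?_, isInfo_of V hinj ?_⟩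
  · intro x hx
    obtain ⟨i, -, rfl⟩ := Finset.mem_image.mp hx
    by_cases h1 : i = k
    · rw [h1, hVk]; exact hcW
    by_cases h2 : i = l
    · rw [h2, hVl]; exact hdW
    · rw [hVo i h1 h2]; exact hcanW i h1 h2
  · apply li_aux2 _ k l hkl
    · intro i h1 h2 r
      rw [hVo i h1 h2]
      exact col_canon i r
    · rw [hVk]; exact hck
    · rw [hVk]; exact hcl
    · rw [hVl]; exact hdl

end RMaux

namespace RMaux
variable {m : ℕ}

/-- Both removed columns lie outside the identity block. -/
lemma case_none (d1 d2 : Fin m → ZMod 2)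
    (h1 : ∀ i, d1 ≠ canon m i) (h2 : ∀ i, d2 ≠ canon m i)
    (W : Multiset (Fin m → ZMod 2))
    (hmem : ∀ x, x ∈ Tms m → x ≠ d1 → x ≠ d2 → x ∈ W) :
    ∃ I : Finset (Fin m → ZMod 2), I.val ≤ W ∧ IsInformationSet (RM1mat m) I := by
  have hinj : Function.Injective (canon m) := canon_inj
  refine ⟨Finset.image (canon m) Finset.univ, finset_le ?_, isInfo_of _ hinj ?_⟩
  · intro x hx
    obtain ⟨i, -, rfl⟩ := Finset.mem_image.mp hx
    exact hmem _ (canon_mem_T i) (fun h => h1 i h.symm) (fun h => h2 i h.symm)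
  · apply li_aux1 _ 0
    · intro i _ r; exact col_canon i r
    · rw [col_canon, if_pos rfl]

/-- Exactly one removed column, `canon i1`, lies in the identity block
(the other removal `d2` is arbitrary but not of `canon` form). -/
lemma case_one (hm : 4 ≤ m) (i1 : Fin (m+1)) (d2 : Fin m → ZMod 2)
    (h2 : ∀ i, d2 ≠ canon m i)
    (W : Multiset (Fin m → ZMod 2))
    (hmem : ∀ x, x ∈ Tms m → x ≠ canon m i1 → x ≠ d2 → x ∈ W) :
    ∃ I : Finset (Fin m → ZMod 2), I.val ≤ W ∧ IsInformationSet (RM1mat m) I := by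
  set x : ℕ := if (i1:ℕ) < m then (i1:ℕ) else 0 with hx
  have hxm : x < m := by rw [hx]; split_ifs with h; exact h; omega
  obtain ⟨kk, hkx, hkbad⟩ := choose_pair hm x hxm d2
  apply case_repl1 i1 (pck m kk) ⟨kk, rfl⟩ hm
  · rw [col_pck hm, if_pos ?_]
    by_cases h : (i1:ℕ) < m
    · have : x = (i1:ℕ) := by rw [hx, if_pos h]
      omega
    · right; right; omega
  · exact hmem _ (pck_mem_T kk) (pck_ne_canon hm kk i1) hkbad
  · intro i hi
    exact hmem _ (canon_mem_T i)
      (fun h => hi (canon_inj h)) (fun h => h2 i h.symm)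

/-- Both removed columns coincide and equal `canon i1`. -/
lemma case_diag (hm : 4 ≤ m) (i1 : Fin (m+1))
    (W : Multiset (Fin m → ZMod 2))
    (hmem : ∀ x, x ∈ Tms m → x ≠ canon m i1 → x ∈ W) :
    ∃ I : Finset (Fin m → ZMod 2), I.val ≤ W ∧ IsInformationSet (RM1mat m) I := by
  set x : ℕ := if (i1:ℕ) < m then (i1:ℕ) else 0 with hx
  have hxm : x < m := by rw [hx]; split_ifs with h; exact h; omega
  obtain ⟨kk, hkx, -⟩ := choose_pair hm x hxm 0
  apply case_repl1 i1 (pck m kk) ⟨kk, rfl⟩ hm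
  · rw [col_pck hm, if_pos ?_]
    by_cases h : (i1:ℕ) < m
    · have : x = (i1:ℕ) := by rw [hx, if_pos h]
      omega
    · right; right; omega
  · exact hmem _ (pck_mem_T kk) (pck_ne_canon hm kk i1)
  · intro i hi
    exact hmem _ (canon_mem_T i) (fun h => hi (canon_inj h))

/-- Both removed columns lie in the identity block and are distinct;
`i2` is not the last row. -/
lemma case_both (hm : 4 ≤ m) (i1 i2 : Fin (m+1)) (hne : i1 ≠ i2) (hi2 : (i2:ℕ) < m)
    (W : Multiset (Fin m → ZMod 2))
    (hmem : ∀ x, x ∈ Tms m → x ≠ canon m i1 → x ≠ canon m i2 → x ∈ W) :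
    ∃ I : Finset (Fin m → ZMod 2), I.val ≤ W ∧ IsInformationSet (RM1mat m) I := by
  have hvne : (i1:ℕ) ≠ (i2:ℕ) := fun h => hne (Fin.ext h)
  set x : ℕ := if (i1:ℕ) < m then (i1:ℕ) else (if (i2:ℕ) = 0 then 1 else 0) with hx
  have hxm : x < m := by rw [hx]; split_ifs <;> omega
  have hxi2 : (i2:ℕ) ≠ x := by rw [hx]; split_ifs <;> omega
  obtain ⟨kc, hkcx, hkcavoid⟩ := choose_pair_avoid hm x (i2:ℕ) hxm hxi2
  obtain ⟨kd, hkdx, -⟩ := choose_pair hm (i2:ℕ) hi2 0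
  apply case_repl2 i1 i2 hne (pck m kc) (pck m kd) ⟨kc, rfl⟩ ⟨kd, rfl⟩ hm
  · rw [col_pck hm, if_pos ?_]
    by_cases h : (i1:ℕ) < m
    · have : x = (i1:ℕ) := by rw [hx, if_pos h]
      omega
    · right; right; omega
  · rw [col_pck hm, if_neg ?_]
    intro h
    rcases h with h | h | h
    · exact hkcavoid (Or.inl h.symm)
    · exact hkcavoid (Or.inr h.symm)
    · omega
  · rw [col_pck hm, if_pos (by omega)]
  · exact hmem _ (pck_mem_T kc) (pck_ne_canon hm kc i1) (pck_ne_canon hm kc i2)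
  · exact hmem _ (pck_mem_T kd) (pck_ne_canon hm kd i1) (pck_ne_canon hm kd i2)
  · intro i h1 h2
    exact hmem _ (canon_mem_T i) (fun h => h1 (canon_inj h)) (fun h => h2 (canon_inj h))

lemma main_avoid (hm : 4 ≤ m) (d1 d2 : Fin m → ZMod 2)
    (W : Multiset (Fin m → ZMod 2))
    (hmem : ∀ x, x ∈ Tms m → x ≠ d1 → x ≠ d2 → x ∈ W) :
    ∃ I : Finset (Fin m → ZMod 2), I.val ≤ W ∧ IsInformationSet (RM1mat m) I := by
  by_cases h1 : ∃ i, d1 = canon m i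
  · obtain ⟨i1, rfl⟩ := h1
    by_cases h2 : ∃ i, d2 = canon m i
    · obtain ⟨i2, rfl⟩ := h2
      by_cases hne : i1 = i2
      · subst hne
        exact case_diag hm i1 W (fun x hx h => hmem x hx h h)
      · by_cases hi2 : (i2:ℕ) < m
        · exact case_both hm i1 i2 hne hi2 W hmem
        · have hi1 : (i1:ℕ) < m := by
            have h1' := i1.2
            have h2' := i2.2
            have : (i1:ℕ) ≠ (i2:ℕ) := fun h => hne (Fin.ext h)
            omega
          exact case_both hm i2 i1 (Ne.symm hne) hi1 W
            (fun x hx ha hb => hmem x hx hb ha)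
    · push_neg at h2
      exact case_one hm i1 d2 (fun i h => h2 i h) W hmem
  · push_neg at h1
    by_cases h2 : ∃ i, d2 = canon m i
    · obtain ⟨i2, rfl⟩ := h2
      exact case_one hm i2 d1 (fun i h => h1 i h) W
        (fun x hx ha hb => hmem x hx hb ha)
    · push_neg at h2
      exact case_none d1 d2 (fun i h => h1 i h) (fun i h => h2 i h) W hmem

end RMaux


/-- For every `m ≥ 4` there exists a `2`-information super-set of size `2m+1` for the
binary first-order Reed–Muller code `RM(1,m)`. -/
theorem rm1_two_superset (m : ℕ) (hm : 4 ≤ m) :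
    ∃ T : Multiset (Fin m → ZMod 2),
      Multiset.card T = 2 * m + 1 ∧ IsInfoSuperSet (RM1mat m) 2 T := by
  classical
  refine ⟨RMaux.Tms m, RMaux.card_T, ?_⟩
  intro W hW hcard
  rw [RMaux.card_T] at hcard
  have hcardD : Multiset.card (RMaux.Tms m - W) = 2 := by
    rw [Multiset.card_sub hW, RMaux.card_T, hcard]
    omega
  obtain ⟨d1, d2, hD⟩ := Multiset.card_eq_two.mp hcardD
  apply RMaux.main_avoid hm d1 d2 W
  intro x hx h1 h2
  have hcount : Multiset.count x (RMaux.Tms m - W) = 0 := by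
    rw [hD]
    simp [Multiset.count_cons, h1, h2]
  rw [Multiset.count_sub] at hcount
  have hxT : 1 ≤ Multiset.count x (RMaux.Tms m) := Multiset.one_le_count_iff_mem.mpr hx
  have : Multiset.count x (RMaux.Tms m) ≤ Multiset.count x W := by omega
  exact Multiset.one_le_count_iff_mem.mp (le_trans hxT this)
end

section
/- Let RM(d,m) denote the binary Reed-Muller code, and let L(d,m,S) denote the minimum size of an S-information super-set for RM(d,m). Then L(d,m,S) ≤ L(d,m−1,S) + L(d−1,m−1,S). -/
/-- A generator matrix of the `q`-ary Reed–Muller code `RM_q(d,m)`: rows are indexed by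
exponent vectors with entries at most `q-1` and total degree at most `d`, columns by the
points of `F^m`; the entry is the evaluation of the corresponding monomial. -/
def RMgen (F : Type*) [CommRing F] (q d m : ℕ) :
    Matrix {e : Fin m → Fin q // ∑ i, (e i : ℕ) ≤ d} (Fin m → F) F :=
  fun e z => ∏ i, z i ^ ((e.1 i : ℕ))


/-- Any multiset has a sub-multiset of any smaller cardinality. -/
lemma Multiset.exists_le_card' {α : Type*} (s : Multiset α) (k : ℕ) (hk : k ≤ Multiset.card s) :
    ∃ t ≤ s, Multiset.card t = k := by
  refine ⟨(s.toList.take k : List α), ?_, ?_⟩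
  · have h1 : ((s.toList.take k : List α) : Multiset α) ≤ (s.toList : Multiset α) :=
      (List.take_sublist k s.toList).subperm
    simpa using h1
  · simp only [Multiset.coe_card, List.length_take]
    have : s.toList.length = Multiset.card s := by simp
    omega

/-- Decompose a sub-multiset of a map (for injective `f`). -/
lemma Multiset.exists_of_le_map' {α β : Type*} [DecidableEq α] [DecidableEq β] {f : α → β}
    (hf : Function.Injective f) {t : Multiset α} :
    ∀ {s : Multiset β}, s ≤ t.map f → ∃ s' ≤ t, s'.map f = s := by
  induction t using Multiset.strongInductionOn with
  | ih t ih =>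
    intro s hs
    rcases s.empty_or_exists_mem with h | ⟨a, ha⟩
    · exact ⟨0, zero_le t, by simp [h]⟩
    · have haf : a ∈ t.map f := Multiset.mem_of_le hs ha
      obtain ⟨x, hx, rfl⟩ := Multiset.mem_map.1 haf
      have ht : x ∈ t := hx
      have hst : t.erase x < t := Multiset.erase_lt.2 ht
      have hs' : s.erase (f x) ≤ (t.erase x).map f := by
        rw [Multiset.map_erase f hf x t]
        exact Multiset.erase_le_erase _ hs
      obtain ⟨s', hs'le, hs'map⟩ := ih (t.erase x) hst hs'
      refine ⟨x ::ₘ s', ?_, ?_⟩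
      · rw [← Multiset.cons_erase ht]
        exact Multiset.cons_le_cons _ hs'le
      · rw [Multiset.map_cons, hs'map, Multiset.cons_erase ha]

/-- counts drop by at most the total card drop. -/
lemma Multiset.count_sub_le {α : Type*} [DecidableEq α] {W T : Multiset α} (h : W ≤ T) (a : α) :
    Multiset.count a T - Multiset.count a W ≤ Multiset.card T - Multiset.card W := by
  obtain ⟨u, rfl⟩ := Multiset.le_iff_exists_add.1 h
  simp only [Multiset.count_add, Multiset.card_add]
  have := Multiset.count_le_card a u
  omega

section Block
open Multiset

variable {F : Type*} [Field F] {ρ1 ρ2 ρ ι1 ι2 ι : Type*}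
  [Fintype ρ1] [Fintype ρ2] [Fintype ρ]
  [DecidableEq ι1] [DecidableEq ι2] [DecidableEq ι]

theorem infoSuperSet_block
    (G1 : Matrix ρ1 ι1 F) (G2 : Matrix ρ2 ι2 F) (G : Matrix ρ ι F)
    (er : ρ ≃ ρ1 ⊕ ρ2) (g1 : ι1 → ι) (g2 : ι2 → ι)
    (hg1 : Function.Injective g1) (hg2 : Function.Injective g2)
    (hdisj : ∀ a b, g1 a ≠ g2 b)
    (h11 : ∀ r j, G (er.symm (.inl r)) (g1 j) = G1 r j)
    (h21 : ∀ r j, G (er.symm (.inr r)) (g1 j) = 0)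
    (h22 : ∀ r j, G (er.symm (.inr r)) (g2 j) = G2 r j)
    {S : ℕ} {T1 : Multiset ι1} {T2 : Multiset ι2}
    (h1 : IsInfoSuperSet G1 S T1) (h2 : IsInfoSuperSet G2 S T2) :
    IsInfoSuperSet G S (T1.map g1 + T2.map g2) := by
  classical
  intro W hW hWcard
  set p : ι → Prop := fun x => ∃ a, g1 a = x with hp
  -- split W
  have hWsplit : W.filter p + W.filter (fun x => ¬ p x) = W := Multiset.filter_add_not p W
  have hA : (T1.map g1).filter p = T1.map g1 :=
    Multiset.filter_eq_self.2 (fun x hx => by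
      obtain ⟨a, _, rfl⟩ := Multiset.mem_map.1 hx; exact ⟨a, rfl⟩)
  have hB : (T2.map g2).filter p = 0 :=
    Multiset.filter_eq_nil.2 (fun x hx => by
      obtain ⟨b, _, rfl⟩ := Multiset.mem_map.1 hx
      rintro ⟨a, ha⟩; exact hdisj a b ha)
  have hA' : (T1.map g1).filter (fun x => ¬ p x) = 0 :=
    Multiset.filter_eq_nil.2 (fun x hx => by
      obtain ⟨a, _, rfl⟩ := Multiset.mem_map.1 hx
      exact fun h => h ⟨a, rfl⟩)
  have hB' : (T2.map g2).filter (fun x => ¬ p x) = T2.map g2 :=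
    Multiset.filter_eq_self.2 (fun x hx => by
      obtain ⟨b, _, rfl⟩ := Multiset.mem_map.1 hx
      rintro ⟨a, ha⟩; exact hdisj a b ha)
  have hW1 : W.filter p ≤ T1.map g1 := by
    have h := Multiset.filter_le_filter p hW
    rwa [Multiset.filter_add, hA, hB, add_zero] at h
  have hW2 : W.filter (fun x => ¬ p x) ≤ T2.map g2 := by
    have h := Multiset.filter_le_filter (fun x => ¬ p x) hW
    rwa [Multiset.filter_add, hA', hB', zero_add] at h
  obtain ⟨V1, hV1le, hV1map⟩ := Multiset.exists_of_le_map' hg1 hW1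
  obtain ⟨V2, hV2le, hV2map⟩ := Multiset.exists_of_le_map' hg2 hW2
  -- cardinalities
  have hcT : Multiset.card (T1.map g1 + T2.map g2)
      = Multiset.card T1 + Multiset.card T2 := by simp
  have hcW : Multiset.card V1 + Multiset.card V2 = Multiset.card W := by
    have : Multiset.card (W.filter p) + Multiset.card (W.filter (fun x => ¬ p x))
        = Multiset.card W := by rw [← Multiset.card_add, hWsplit]
    rw [← this, ← hV1map, ← hV2map]; simp
  have hc1 : Multiset.card T1 - S ≤ Multiset.card V1 := by
    have := Multiset.card_le_card hV2le
    rw [hcT] at hWcard; omega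
  have hc2 : Multiset.card T2 - S ≤ Multiset.card V2 := by
    have := Multiset.card_le_card hV1le
    rw [hcT] at hWcard; omega
  obtain ⟨V1', hV1'le, hV1'card⟩ := Multiset.exists_le_card' V1 _ hc1
  obtain ⟨V2', hV2'le, hV2'card⟩ := Multiset.exists_le_card' V2 _ hc2
  obtain ⟨I1, hI1le, hI1card, hI1li⟩ := h1 V1' (hV1'le.trans hV1le) hV1'card
  obtain ⟨I2, hI2le, hI2card, hI2li⟩ := h2 V2' (hV2'le.trans hV2le) hV2'card
  -- assemble
  have hdisjF : Disjoint (I1.image g1) (I2.image g2) := by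
    simp only [Finset.disjoint_left, Finset.mem_image]
    rintro x ⟨a, _, rfl⟩ ⟨b, _, hb⟩
    exact hdisj a b hb.symm
  refine ⟨(I1.image g1).disjUnion (I2.image g2) hdisjF, ?_, ?_, ?_⟩
  · show (I1.image g1).val + (I2.image g2).val ≤ W
    have e1 : (I1.image g1).val = I1.val.map g1 :=
      Finset.image_val_of_injOn (hg1.injOn)
    have e2 : (I2.image g2).val = I2.val.map g2 :=
      Finset.image_val_of_injOn (hg2.injOn)
    rw [e1, e2, ← hWsplit]
    refine add_le_add ?_ ?_
    · rw [← hV1map]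
      exact Multiset.map_le_map (hI1le.trans hV1'le)
    · rw [← hV2map]
      exact Multiset.map_le_map (hI2le.trans hV2'le)
  · rw [Finset.card_disjUnion, Finset.card_image_of_injective _ hg1,
      Finset.card_image_of_injective _ hg2, hI1card, hI2card,
      ← Fintype.card_sum]
    exact (Fintype.card_congr er).symm
  · -- linear independence
    set I : Finset ι := (I1.image g1).disjUnion (I2.image g2) hdisjF with hI
    -- the sum-indexed family
    set u : ↥I1 ⊕ ↥I2 → (ρ → F) := fun j => match j with
      | .inl j => fun r => G r (g1 j)
      | .inr j => fun r => G r (g2 j) with hu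
    have hul : LinearIndependent F u := by
      rw [Fintype.linearIndependent_iff]
      intro g hg
      have hg' : ∀ r : ρ, (∑ j : ↥I1, g (.inl j) * G r (g1 j)) +
          (∑ j : ↥I2, g (.inr j) * G r (g2 j)) = 0 := by
        intro r
        have := congrFun hg r
        simpa [hu, Fintype.sum_sum_type, Finset.sum_apply] using this
      have hg2' : ∀ j : ↥I2, g (.inr j) = 0 := by
        have := Fintype.linearIndependent_iff.1 hI2li (fun j => g (.inr j))
        apply this
        funext r
        have := hg' (er.symm (.inr r))
        simp only [h21, h22, mul_zero, Finset.sum_const_zero, zero_add] at this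
        simpa [Finset.sum_apply] using this
      have hg1' : ∀ j : ↥I1, g (.inl j) = 0 := by
        have := Fintype.linearIndependent_iff.1 hI1li (fun j => g (.inl j))
        apply this
        funext r
        have h := hg' (er.symm (.inl r))
        simp only [h11, hg2', zero_mul, Finset.sum_const_zero, add_zero] at h
        simpa [Finset.sum_apply] using h
      rintro (j | j)
      exacts [hg1' j, hg2' j]
    -- transfer along an equivalence ↥I1 ⊕ ↥I2 ≃ ↥I
    have hmem : ∀ x : ι, x ∈ I ↔ (∃ a : ↥I1, g1 a = x) ∨ (∃ b : ↥I2, g2 b = x) := by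
      intro x
      simp only [hI, Finset.mem_disjUnion, Finset.mem_image]
      constructor
      · rintro (⟨a, ha, rfl⟩ | ⟨b, hb, rfl⟩)
        exacts [Or.inl ⟨⟨a, ha⟩, rfl⟩, Or.inr ⟨⟨b, hb⟩, rfl⟩]
      · rintro (⟨⟨a, ha⟩, rfl⟩ | ⟨⟨b, hb⟩, rfl⟩)
        exacts [Or.inl ⟨a, ha, rfl⟩, Or.inr ⟨b, hb, rfl⟩]
    let eIdx : ↥I1 ⊕ ↥I2 → ↥I := fun j => match j with
      | .inl j => ⟨g1 j, (hmem _).2 (Or.inl ⟨j, rfl⟩)⟩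
      | .inr j => ⟨g2 j, (hmem _).2 (Or.inr ⟨j, rfl⟩)⟩
    have hbij : Function.Bijective eIdx := by
      constructor
      · rintro (a | a) (b | b) h <;> simp only [eIdx, Subtype.mk.injEq] at h
        · exact congrArg Sum.inl (Subtype.ext (hg1 h))
        · exact absurd h (hdisj _ _)
        · exact absurd h.symm (hdisj _ _)
        · exact congrArg Sum.inr (Subtype.ext (hg2 h))
      · rintro ⟨x, hx⟩
        rcases (hmem x).1 hx with ⟨a, rfl⟩ | ⟨b, rfl⟩
        exacts [⟨.inl a, rfl⟩, ⟨.inr b, rfl⟩]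
    have hcomp : (fun j : ↥I => fun i : ρ => G i (j : ι)) ∘ (Equiv.ofBijective eIdx hbij) = u := by
      funext j
      rcases j with j | j <;> rfl
    exact (linearIndependent_equiv' (Equiv.ofBijective eIdx hbij) hcomp).1 hul
end Block

lemma zmod2_pow_fin2 (x y : Fin 2) :
    ((x : ℕ) : ZMod 2) ^ (y : ℕ) = if (y : ℕ) ≤ (x : ℕ) then 1 else 0 := by
  revert x y; decide

lemma rm_entry (d m : ℕ) (e e' : {e : Fin m → Fin 2 // ∑ i, (e i : ℕ) ≤ d}) :
    RMgen (ZMod 2) 2 d m e (fun i => ((e'.1 i : ℕ) : ZMod 2)) =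
      if ∀ i, (e.1 i : ℕ) ≤ (e'.1 i : ℕ) then 1 else 0 := by
  classical
  unfold RMgen
  rw [Fintype.prod_congr _ _ (fun i => zmod2_pow_fin2 (e'.1 i) (e.1 i))]
  rw [Finset.prod_boole]
  simp

theorem rm_infoSet_exists (d m : ℕ) :
    ∃ I : Finset (Fin m → ZMod 2), IsInformationSet (RMgen (ZMod 2) 2 d m) I := by
  classical
  set ρ := {e : Fin m → Fin 2 // ∑ i, (e i : ℕ) ≤ d} with hρ
  set φ : ρ → (Fin m → ZMod 2) := fun e => fun i => ((e.1 i : ℕ) : ZMod 2) with hφdef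
  have hφ : Function.Injective φ := by
    intro a b h
    apply Subtype.ext; funext i
    have h1 := congrFun h i
    have h2 : ((a.1 i : ℕ) : ZMod 2).val = (a.1 i : ℕ) := ZMod.val_natCast_of_lt (a.1 i).2
    have h3 : ((b.1 i : ℕ) : ZMod 2).val = (b.1 i : ℕ) := ZMod.val_natCast_of_lt (b.1 i).2
    apply Fin.ext
    rw [← h2, ← h3]
    exact congrArg ZMod.val h1
  -- linear independence of the columns indexed by ρ
  have hli : LinearIndependent (ZMod 2)
      (fun e' : ρ => fun e : ρ => RMgen (ZMod 2) 2 d m e (φ e')) := by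
    rw [Fintype.linearIndependent_iff]
    intro g hg
    by_contra hne
    push_neg at hne
    obtain ⟨e1, he1⟩ := hne
    have hs : (Finset.univ.filter (fun e' : ρ => g e' ≠ 0)).Nonempty :=
      ⟨e1, by simp [he1]⟩
    obtain ⟨e0, he0s, hmax⟩ :=
      Finset.exists_max_image _ (fun e' : ρ => ∑ i, (e'.1 i : ℕ)) hs
    have hg0 : g e0 ≠ 0 := by simpa using (Finset.mem_filter.1 he0s).2
    have hrow := congrFun hg e0
    simp only [Finset.sum_apply, Pi.smul_apply, smul_eq_mul, Pi.zero_apply] at hrow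
    have hrow' : ∑ e' : ρ, g e' *
        (if ∀ i, (e0.1 i : ℕ) ≤ (e'.1 i : ℕ) then (1 : ZMod 2) else 0) = 0 := by
      refine Eq.trans ?_ hrow
      exact Finset.sum_congr rfl (fun e' _ => by rw [rm_entry])
    simp only [mul_ite, mul_one, mul_zero] at hrow'
    rw [← Finset.sum_filter] at hrow'
    have hsingle : ∑ e' ∈ Finset.univ.filter
        (fun e' : ρ => ∀ i, (e0.1 i : ℕ) ≤ (e'.1 i : ℕ)), g e' = g e0 := by
      apply Finset.sum_eq_single_of_mem
      · simp
      · intro b hb hbne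
        by_contra hgb
        have hble : ∀ i, (e0.1 i : ℕ) ≤ (b.1 i : ℕ) := (Finset.mem_filter.1 hb).2
        have hbs : b ∈ Finset.univ.filter (fun e' : ρ => g e' ≠ 0) := by simp [hgb]
        have hsum := hmax b hbs
        -- pointwise ≤ and sum ≥ forces equality
        have : b = e0 := by
          apply Subtype.ext; funext i
          apply Fin.ext
          by_contra hne2
          have hlt : (e0.1 i : ℕ) < (b.1 i : ℕ) := lt_of_le_of_ne (hble i) (Ne.symm hne2)
          have : ∑ i, (e0.1 i : ℕ) < ∑ i, (b.1 i : ℕ) :=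
            Finset.sum_lt_sum (fun i _ => hble i) ⟨i, Finset.mem_univ i, hlt⟩
          omega
        exact hbne this
    rw [hsingle] at hrow'
    exact hg0 hrow'
  refine ⟨Finset.image φ Finset.univ, ?_, ?_⟩
  · rw [Finset.card_image_of_injective _ hφ, Finset.card_univ]
  · set I := Finset.image φ Finset.univ with hI
    let eI : ρ → ↥I := fun e => ⟨φ e, Finset.mem_image_of_mem φ (Finset.mem_univ e)⟩
    have hbij : Function.Bijective eI := by
      constructor
      · intro a b h
        exact hφ (congrArg Subtype.val h)
      · rintro ⟨x, hx⟩
        obtain ⟨e, _, rfl⟩ := Finset.mem_image.1 hx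
        exact ⟨e, rfl⟩
    have hcomp : (fun j : ↥I => fun e : ρ => RMgen (ZMod 2) 2 d m e (j : Fin m → ZMod 2))
        ∘ (Equiv.ofBijective eI hbij)
        = (fun e' : ρ => fun e : ρ => RMgen (ZMod 2) 2 d m e (φ e')) := rfl
    exact (linearIndependent_equiv' (Equiv.ofBijective eI hbij) hcomp).1 hli


lemma Multiset.count_sub_le' {α : Type*} [DecidableEq α] {W T : Multiset α} (h : W ≤ T) (a : α) :
    Multiset.count a T - Multiset.count a W ≤ Multiset.card T - Multiset.card W := by
  obtain ⟨u, rfl⟩ := Multiset.le_iff_exists_add.1 h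
  simp only [Multiset.count_add, Multiset.card_add]
  have := Multiset.count_le_card a u
  omega

theorem infoSuperSet_of_infoSet {F : Type*} [Field F] {ρ ι : Type*} [Fintype ρ]
    (G : Matrix ρ ι F) {I : Finset ι} (hI : IsInformationSet G I) (S : ℕ) :
    IsInfoSuperSet G S ((S + 1) • I.val) := by
  classical
  intro W hW hWc
  refine ⟨I, ?_, hI⟩
  rw [Multiset.le_iff_count]
  intro a
  by_cases ha : a ∈ I
  · have h1 : Multiset.count a I.val = 1 := Multiset.count_eq_one_of_mem I.nodup ha
    have hT : Multiset.count a ((S + 1) • I.val) = S + 1 := by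
      rw [Multiset.count_nsmul, h1, mul_one]
    have h2 := Multiset.count_sub_le' hW a
    have h3 := Multiset.count_le_card a ((S + 1) • I.val)
    rw [h1]
    omega
  · have : Multiset.count a I.val = 0 := by
      rw [Multiset.count_eq_zero]
      exact fun h => ha h
    omega

/-- The row-index equivalence for the `(u,u+v)` decomposition. -/
def rmRowEquiv (d n : ℕ) (hd : 1 ≤ d) :
    {e : Fin (n+1) → Fin 2 // ∑ i, (e i : ℕ) ≤ d} ≃
      ({e : Fin n → Fin 2 // ∑ i, (e i : ℕ) ≤ d} ⊕
        {e : Fin n → Fin 2 // ∑ i, (e i : ℕ) ≤ d - 1}) where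
  toFun e :=
    if h : e.1 (Fin.last n) = 0 then
      Sum.inl ⟨Fin.init e.1, by
        have h2 := e.2
        rw [Fin.sum_univ_castSucc] at h2
        have h3 : ((e.1 (Fin.last n) : ℕ)) = 0 := by rw [h]; rfl
        have h4 : ∑ i, ((Fin.init e.1 i : ℕ)) = ∑ i : Fin n, ((e.1 i.castSucc : ℕ)) := rfl
        omega⟩
    else
      Sum.inr ⟨Fin.init e.1, by
        have h2 := e.2
        rw [Fin.sum_univ_castSucc] at h2
        have hlt := (e.1 (Fin.last n)).2
        have hne : (e.1 (Fin.last n) : ℕ) ≠ 0 := fun hc => h (Fin.ext hc)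
        have h4 : ∑ i, ((Fin.init e.1 i : ℕ)) = ∑ i : Fin n, ((e.1 i.castSucc : ℕ)) := rfl
        omega⟩
  invFun x :=
    match x with
    | .inl e => ⟨Fin.snoc e.1 0, by
        rw [Fin.sum_univ_castSucc]
        simp only [Fin.snoc_castSucc, Fin.snoc_last, Fin.val_zero, add_zero]
        exact e.2⟩
    | .inr e => ⟨Fin.snoc e.1 1, by
        rw [Fin.sum_univ_castSucc]
        simp only [Fin.snoc_castSucc, Fin.snoc_last, Fin.val_one]
        have := e.2
        omega⟩
  left_inv e := by
    by_cases h : e.1 (Fin.last n) = 0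
    · dsimp only
      rw [dif_pos h]
      apply Subtype.ext
      show Fin.snoc (Fin.init e.1) 0 = e.1
      rw [← h, Fin.snoc_init_self]
    · dsimp only
      rw [dif_neg h]
      apply Subtype.ext
      show Fin.snoc (Fin.init e.1) 1 = e.1
      have h1 : e.1 (Fin.last n) = 1 := by
        have hlt := (e.1 (Fin.last n)).2
        have hne : (e.1 (Fin.last n) : ℕ) ≠ 0 := fun hc => h (Fin.ext hc)
        apply Fin.ext
        simp only [Fin.val_one]
        omega
      rw [← h1, Fin.snoc_init_self]
  right_inv x := by
    rcases x with e | e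
    · have h : (Fin.snoc e.1 0 : Fin (n+1) → Fin 2) (Fin.last n) = 0 := by simp
      dsimp only
      rw [dif_pos h]
      congr 1
      apply Subtype.ext
      simp [Fin.init_snoc]
    · have h : (Fin.snoc e.1 1 : Fin (n+1) → Fin 2) (Fin.last n) = 1 := by simp
      have h' : ¬ (Fin.snoc e.1 1 : Fin (n+1) → Fin 2) (Fin.last n) = 0 := by rw [h]; decide
      dsimp only
      rw [dif_neg h']
      congr 1
      apply Subtype.ext
      simp [Fin.init_snoc]


theorem rm_rec_aux (d n S : ℕ) (hd : 1 ≤ d) :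
    minSuperSize (RMgen (ZMod 2) 2 d (n + 1)) S ≤
      minSuperSize (RMgen (ZMod 2) 2 d n) S +
        minSuperSize (RMgen (ZMod 2) 2 (d - 1) n) S := by
  classical
  have hg1 : Function.Injective
      (fun z : Fin n → ZMod 2 => (Fin.snoc z 0 : Fin (n+1) → ZMod 2)) := by
    intro a b h
    have := congrArg Fin.init h
    simpa [Fin.init_snoc] using this
  have hg2 : Function.Injective
      (fun z : Fin n → ZMod 2 => (Fin.snoc z 1 : Fin (n+1) → ZMod 2)) := by
    intro a b h
    have := congrArg Fin.init h
    simpa [Fin.init_snoc] using this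
  have hdisj : ∀ a b : Fin n → ZMod 2,
      (Fin.snoc a 0 : Fin (n+1) → ZMod 2) ≠ Fin.snoc b 1 := by
    intro a b h
    have h2 := congrFun h (Fin.last n)
    simp only [Fin.snoc_last] at h2
    exact absurd h2 (by decide)
  have h11 : ∀ r j, RMgen (ZMod 2) 2 d (n+1) ((rmRowEquiv d n hd).symm (.inl r))
      ((fun z : Fin n → ZMod 2 => (Fin.snoc z 0 : Fin (n+1) → ZMod 2)) j)
      = RMgen (ZMod 2) 2 d n r j := by
    intro r j
    have hr : ∀ i, (((rmRowEquiv d n hd).symm (Sum.inl r)).1 i)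
        = (Fin.snoc r.1 0 : Fin (n+1) → Fin 2) i := fun i => rfl
    unfold RMgen
    rw [Fin.prod_univ_castSucc]
    simp only [hr, Fin.snoc_castSucc, Fin.snoc_last, Fin.val_zero, pow_zero, mul_one]
  have h21 : ∀ r j, RMgen (ZMod 2) 2 d (n+1) ((rmRowEquiv d n hd).symm (.inr r))
      ((fun z : Fin n → ZMod 2 => (Fin.snoc z 0 : Fin (n+1) → ZMod 2)) j) = 0 := by
    intro r j
    have hr : ∀ i, (((rmRowEquiv d n hd).symm (Sum.inr r)).1 i)
        = (Fin.snoc r.1 1 : Fin (n+1) → Fin 2) i := fun i => rfl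
    unfold RMgen
    rw [Fin.prod_univ_castSucc]
    simp only [hr, Fin.snoc_castSucc, Fin.snoc_last, Fin.val_one, pow_one, mul_zero]
  have h22 : ∀ r j, RMgen (ZMod 2) 2 d (n+1) ((rmRowEquiv d n hd).symm (.inr r))
      ((fun z : Fin n → ZMod 2 => (Fin.snoc z 1 : Fin (n+1) → ZMod 2)) j)
      = RMgen (ZMod 2) 2 (d-1) n r j := by
    intro r j
    have hr : ∀ i, (((rmRowEquiv d n hd).symm (Sum.inr r)).1 i)
        = (Fin.snoc r.1 1 : Fin (n+1) → Fin 2) i := fun i => rfl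
    unfold RMgen
    rw [Fin.prod_univ_castSucc]
    simp only [hr, Fin.snoc_castSucc, Fin.snoc_last, Fin.val_one, pow_one, one_pow, mul_one]
  obtain ⟨I1, hI1⟩ := rm_infoSet_exists d n
  obtain ⟨I2, hI2⟩ := rm_infoSet_exists (d - 1) n
  have hne1 : {c | ∃ T : Multiset (Fin n → ZMod 2),
      IsInfoSuperSet (RMgen (ZMod 2) 2 d n) S T ∧ Multiset.card T = c}.Nonempty :=
    ⟨_, _, infoSuperSet_of_infoSet _ hI1 S, rfl⟩
  have hne2 : {c | ∃ T : Multiset (Fin n → ZMod 2),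
      IsInfoSuperSet (RMgen (ZMod 2) 2 (d-1) n) S T ∧ Multiset.card T = c}.Nonempty :=
    ⟨_, _, infoSuperSet_of_infoSet _ hI2 S, rfl⟩
  obtain ⟨T1, hT1, hT1c⟩ : ∃ T1, IsInfoSuperSet (RMgen (ZMod 2) 2 d n) S T1 ∧
      Multiset.card T1 = minSuperSize (RMgen (ZMod 2) 2 d n) S := Nat.sInf_mem hne1
  obtain ⟨T2, hT2, hT2c⟩ : ∃ T2, IsInfoSuperSet (RMgen (ZMod 2) 2 (d-1) n) S T2 ∧
      Multiset.card T2 = minSuperSize (RMgen (ZMod 2) 2 (d-1) n) S := Nat.sInf_mem hne2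
  have hblock := infoSuperSet_block (RMgen (ZMod 2) 2 d n) (RMgen (ZMod 2) 2 (d-1) n)
    (RMgen (ZMod 2) 2 d (n+1)) (rmRowEquiv d n hd) _ _ hg1 hg2 hdisj h11 h21 h22 hT1 hT2
  apply Nat.sInf_le
  refine ⟨_, hblock, ?_⟩
  rw [Multiset.card_add, Multiset.card_map, Multiset.card_map, hT1c, hT2c]

/-- The `(u,u+v)` recursion bound for binary Reed–Muller codes: the minimum size
`L(d,m,S)` of an `S`-information super-set for `RM(d,m)` satisfies
`L(d,m,S) ≤ L(d,m-1,S) + L(d-1,m-1,S)`. -/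
theorem rm_recursive_bound (d m S : ℕ) (hd : 1 ≤ d) (hdm : d < m) :
    minSuperSize (RMgen (ZMod 2) 2 d m) S ≤
      minSuperSize (RMgen (ZMod 2) 2 d (m - 1)) S +
        minSuperSize (RMgen (ZMod 2) 2 (d - 1) (m - 1)) S := by
  have h := rm_rec_aux d (m - 1) S hd
  rwa [Nat.sub_add_cancel (by omega : 1 ≤ m)] at h
end

section
/- Let C be an [n,k]_q linear code with minimum distance d_min, and let S1, S2 be integers with 0 < S1, S2 < d_min. If T1 is an S1-information super-set and T2 is an S2-information super-set for C, then the multiset union T1 ⊎ T2 is an (S1+S2)-information super-set for C. Consequently L(S1+S2) ≤ L(S1) + L(S2), where L(S) denotes the minimum size of an S-information super-set for C. -/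

lemma exists_sub_card {α : Type*} (s : Multiset α) {m : ℕ} (h : m ≤ Multiset.card s) :
    ∃ t ≤ s, Multiset.card t = m := by
  refine ⟨(s.toList.take m : List α), ?_, ?_⟩
  · have h' : (↑(s.toList.take m) : Multiset α) ≤ ↑s.toList :=
      Multiset.coe_le.mpr (s.toList.take_sublist m).subperm
    simpa [s.coe_toList] using h'
  · simp only [Multiset.coe_card, List.length_take, Multiset.length_toList]
    omega

lemma aux_superset_add {F : Type*} [Field F] {n k S1 S2 : ℕ}
    (G : Matrix (Fin k) (Fin n) F) (T1 T2 : Multiset (Fin n))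
    (hT1 : IsInfoSuperSet G S1 T1) (hT2 : IsInfoSuperSet G S2 T2) :
    IsInfoSuperSet G (S1 + S2) (T1 + T2) := by
  intro W hW hcard
  classical
  have hsplit : W ∩ T1 + (W - T1) = W := by
    rw [add_comm]; exact Multiset.sub_add_inter W T1
  have hW1T : W ∩ T1 ≤ T1 := Multiset.inter_le_right
  have hW2T : W - T1 ≤ T2 := by
    rw [tsub_le_iff_right, add_comm]; exact hW
  have hcadd : Multiset.card (W ∩ T1) + Multiset.card (W - T1) = Multiset.card W := by
    rw [← Multiset.card_add, hsplit]
  rw [Multiset.card_add] at hcard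
  by_cases h1 : Multiset.card T1 - S1 ≤ Multiset.card (W ∩ T1)
  · obtain ⟨W', hle, hc⟩ := exists_sub_card _ h1
    obtain ⟨I, hI, hinfo⟩ := hT1 W' (hle.trans hW1T) hc
    exact ⟨I, hI.trans (hle.trans (Multiset.inter_le_left)), hinfo⟩
  · have hc1 := Multiset.card_le_card hW1T
    have hc2 := Multiset.card_le_card hW2T
    have h2 : Multiset.card T2 - S2 ≤ Multiset.card (W - T1) := by omega
    obtain ⟨W', hle, hc⟩ := exists_sub_card _ h2
    obtain ⟨I, hI, hinfo⟩ := hT2 W' (hle.trans hW2T) hc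
    refine ⟨I, hI.trans (hle.trans ?_), hinfo⟩
    exact Multiset.sub_le_self W T1

/-- If `T1` is an `S1`-information super-set and `T2` an `S2`-information super-set for an
`[n,k]_q` code with minimum distance `d_min` and `0 < S1, S2 < d_min`, then the multiset
union `T1 ⊎ T2` is an `(S1+S2)`-information super-set; consequently
`L(S1+S2) ≤ L(S1) + L(S2)` for the minimum super-set sizes. -/
theorem superset_additivity {F : Type*} [Field F] [DecidableEq F] {n k dmin S1 S2 : ℕ}
    (G : Matrix (Fin k) (Fin n) F)
    (hG : LinearIndependent F fun i : Fin k => G i)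
    (hlb : ∀ u : Fin k → F, u ≠ 0 → dmin ≤ hammingNorm (Matrix.vecMul u G))
    (hex : ∃ u : Fin k → F, u ≠ 0 ∧ hammingNorm (Matrix.vecMul u G) = dmin)
    (hS1 : 0 < S1) (hS1' : S1 < dmin) (hS2 : 0 < S2) (hS2' : S2 < dmin)
    (T1 T2 : Multiset (Fin n))
    (hT1 : IsInfoSuperSet G S1 T1) (hT2 : IsInfoSuperSet G S2 T2) :
    IsInfoSuperSet G (S1 + S2) (T1 + T2) ∧
      minSuperSize G (S1 + S2) ≤ minSuperSize G S1 + minSuperSize G S2 := by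
  refine ⟨aux_superset_add G T1 T2 hT1 hT2, ?_⟩
  have h1 : minSuperSize G S1 ∈ {c | ∃ T : Multiset (Fin n), IsInfoSuperSet G S1 T ∧ Multiset.card T = c} :=
    Nat.sInf_mem ⟨_, T1, hT1, rfl⟩
  have h2 : minSuperSize G S2 ∈ {c | ∃ T : Multiset (Fin n), IsInfoSuperSet G S2 T ∧ Multiset.card T = c} :=
    Nat.sInf_mem ⟨_, T2, hT2, rfl⟩
  obtain ⟨U1, hU1, hc1⟩ := h1
  obtain ⟨U2, hU2, hc2⟩ := h2
  exact Nat.sInf_le ⟨U1 + U2, aux_superset_add G U1 U2 hU1 hU2, by rw [Multiset.card_add, hc1, hc2]⟩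
end

section
/- Let F_q be a finite field whose characteristic is neither 2 nor 3. Then there exists a 2-information super-set for RM_q(1, q−2) of size q+1, and this is optimal: the minimum size of a 2-information super-set for RM_q(1,q−2) is exactly q+1. -/
set_option linter.unusedSectionVars false
namespace RMaux

open Finset

variable {F : Type*} [Field F] [Fintype F] [DecidableEq F]

lemma exp_char {q m : ℕ} (e : Fin m → Fin q) (he : ∑ i, ((e i : ℕ)) ≤ 1) :
    (∀ i, (e i : ℕ) = 0) ∨ ∃ i, (e i : ℕ) = 1 ∧ ∀ i', i' ≠ i → (e i' : ℕ) = 0 := by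
  by_cases h : ∀ i, (e i : ℕ) = 0
  · exact Or.inl h
  · push_neg at h
    obtain ⟨i, hi⟩ := h
    have h2 : (e i : ℕ) ≤ ∑ i', ((e i' : ℕ)) :=
      Finset.single_le_sum (f := fun i' => ((e i' : ℕ))) (fun _ _ => Nat.zero_le _) (Finset.mem_univ i)
    refine Or.inr ⟨i, by omega, ?_⟩
    intro i' hi'
    by_contra h0
    have h3 : (e i : ℕ) + (e i' : ℕ) ≤ ∑ j, ((e j : ℕ)) := by
      have hsub : ({i, i'} : Finset (Fin m)) ⊆ Finset.univ := Finset.subset_univ _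
      have := Finset.sum_le_sum_of_subset (f := fun j => ((e j : ℕ))) hsub
      rwa [Finset.sum_pair (by exact fun h => hi' h.symm)] at this
    omega

def theta (q m : ℕ) (hq : 1 < q) :
    Fin (m + 1) → {e : Fin m → Fin q // ∑ i, (e i : ℕ) ≤ 1} :=
  Fin.cases
    ⟨fun _ => ⟨0, by omega⟩, by simp⟩
    (fun i => ⟨fun i' => ⟨if i' = i then 1 else 0, by split <;> omega⟩, by simp⟩)

lemma theta_bijective (q m : ℕ) (hq : 1 < q) : Function.Bijective (theta q m hq) := by
  constructor
  · have key : ∀ j, ∑ i, (((theta q m hq j).1 i : ℕ)) * ((i : ℕ) + 1) = (j : ℕ) := by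
      intro j
      induction j using Fin.cases with
      | zero => simp [theta]
      | succ i => simp [theta, Finset.sum_ite_eq']
    intro j j' h
    have hj := key j
    rw [h, key j'] at hj
    exact Fin.ext hj.symm
  · rintro ⟨e, he⟩
    rcases exp_char e he with h0 | ⟨i, h1, h0⟩
    · exact ⟨0, Subtype.ext (funext fun i => Fin.ext (by simpa [theta] using (h0 i).symm))⟩
    · refine ⟨i.succ, Subtype.ext (funext fun i' => Fin.ext ?_)⟩
      simp only [theta, Fin.cases_succ]
      split
      · next hEq => subst hEq; exact h1.symm
      · next hne => exact (h0 i' hne).symm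

lemma card_rho (q m : ℕ) (hq : 1 < q) :
    Fintype.card {e : Fin m → Fin q // ∑ i, (e i : ℕ) ≤ 1} = m + 1 := by
  rw [← Fintype.card_of_bijective (theta_bijective q m hq)]
  simp

lemma col_eq {q m : ℕ} (hq : 1 < q) (y : Fin m → F) (j : Fin (m + 1)) :
    RMgen F q 1 m (theta q m hq j) y = (Fin.cons 1 y : Fin (m+1) → F) j := by
  induction j using Fin.cases with
  | zero => simp [RMgen, theta]
  | succ i =>
    rw [Fin.cons_succ]
    simp only [RMgen, theta, Fin.cases_succ]
    rw [Finset.prod_eq_single i (fun b _ hb => by simp [hb]) (by simp)]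
    simp

lemma vand_zero {n : ℕ} (s : Finset F) (hcard : s.card = n) (c : F → F)
    (hc : ∀ x, x ∉ s → c x = 0)
    (h : ∀ k : Fin n, ∑ x ∈ s, c x * x ^ (k : ℕ) = 0) : ∀ x, c x = 0 := by
  let σ : Fin n ≃ {x // x ∈ s} := (s.equivFin.trans (finCongr hcard)).symm
  set v : Fin n → F := fun k => ((σ k : F)) with hv
  have hvinj : Function.Injective v := by
    intro a b hab
    exact σ.injective (Subtype.ext hab)
  set M : Matrix (Fin n) (Fin n) F := (Matrix.vandermonde v).transpose with hM
  have hdet : IsUnit M.det := by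
    rw [hM, Matrix.det_transpose, Matrix.det_vandermonde]
    rw [isUnit_iff_ne_zero]
    rw [Finset.prod_ne_zero_iff]
    intro i _
    rw [Finset.prod_ne_zero_iff]
    intro j hj
    have hij : i < j := Finset.mem_Ioi.mp hj
    exact sub_ne_zero.mpr fun hEq => absurd (hvinj hEq) hij.ne'
  have hker : M.mulVec (fun k => c (v k)) = 0 := by
    funext i
    have h2 := h i
    rw [← Finset.sum_coe_sort] at h2
    rw [Matrix.mulVec]
    show ∑ k, M i k * c (v k) = 0
    rw [← h2]
    refine Fintype.sum_equiv σ _ _ fun k => ?_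
    simp only [hM, Matrix.transpose_apply, Matrix.vandermonde_apply, hv]
    ring
  have hzero : (fun k => c (v k)) = 0 := by
    have h2 := congrArg (fun w => M⁻¹.mulVec w) hker
    simpa [Matrix.mulVec_mulVec, Matrix.nonsing_inv_mul M hdet] using h2
  intro x
  by_cases hx : x ∈ s
  · have h3 : c (v (σ.symm ⟨x, hx⟩)) = 0 := congrFun hzero _
    simpa [hv, Equiv.apply_symm_apply] using h3
  · exact hc x hx

def gsc (x : F) : F := if x = 0 then 3 else if x = 1 then -1 else 1

def gg : Option F → F
  | none => 2
  | some x => gsc x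

def uvec (m : ℕ) : Option F → Fin (m + 1) → F
  | none => fun j => if j = Fin.last m then 1 else 0
  | some x => fun j => x ^ (j : ℕ)

def zpt (m : ℕ) : Option F → Fin m → F
  | none => fun i => if i.succ = Fin.last m then (2 : F)⁻¹ else 0
  | some x => fun i => (gsc x)⁻¹ * x ^ ((i : ℕ) + 1)

def avec (m : ℕ) : Fin (m + 1) → F := fun j => if j = 0 then 3 else 2

lemma sum_avec_pow (hq : 5 ≤ Fintype.card F) (x : F) :
    ∑ j : Fin (Fintype.card F - 2 + 1), avec (Fintype.card F - 2) j * x ^ (j : ℕ)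
      = gsc x := by
  set q := Fintype.card F with hqdef
  set m := q - 2 with hmdef
  have hm1 : m + 1 = q - 1 := by omega
  have expand : ∑ j : Fin (m + 1), avec m j * x ^ (j : ℕ)
      = 1 + 2 * ∑ j ∈ Finset.range (m + 1), x ^ j := by
    rw [Fin.sum_univ_succ, Finset.sum_range_succ']
    have h1 : avec (F := F) m 0 = 3 := if_pos rfl
    have h2 : ∀ i : Fin m, avec (F := F) m i.succ = 2 :=
      fun i => if_neg (Fin.succ_ne_zero i)
    simp only [h1, h2, Fin.val_zero, pow_zero, mul_one, Fin.val_succ]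
    rw [← Fin.sum_univ_eq_sum_range (fun i => x ^ (i + 1)) m]
    rw [mul_add, Finset.mul_sum]
    ring
  rw [expand]
  by_cases h0 : x = 0
  · subst h0
    rw [zero_geom_sum, if_neg (Nat.succ_ne_zero m)]
    norm_num [gsc]
  by_cases h1 : x = 1
  · subst h1
    rw [one_geom_sum]
    have : ((m + 1 : ℕ) : F) = -1 := by
      rw [hm1, Nat.cast_sub (by omega), Nat.cast_one, FiniteField.cast_card_eq_zero]
      ring
    rw [this]
    norm_num [gsc]
  · rw [geom_sum_eq h1, hm1, FiniteField.pow_card_sub_one_eq_one x h0]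
    simp [gsc, h0, h1]

def Phi (m : ℕ) (a : Fin (m + 1) → F) : (Fin (m + 1) → F) →ₗ[F] (Fin (m + 1) → F) where
  toFun v := Fin.cons (∑ j, a j * v j) (fun i => v i.succ)
  map_add' v w := by
    funext j
    induction j using Fin.cases with
    | zero => simp [mul_add, Finset.sum_add_distrib]
    | succ i => simp
  map_smul' cv v := by
    funext j
    induction j using Fin.cases with
    | zero =>
      simp only [Pi.smul_apply, smul_eq_mul, Fin.cons_zero, RingHom.id_apply,
        Finset.mul_sum]
      exact Finset.sum_congr rfl fun j _ => by ring
    | succ i => simp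

lemma Phi_apply_zero (m : ℕ) (a : Fin (m + 1) → F) (v : Fin (m + 1) → F) :
    Phi m a v 0 = ∑ j, a j * v j := rfl

lemma Phi_apply_succ (m : ℕ) (a : Fin (m + 1) → F) (v : Fin (m + 1) → F) (i : Fin m) :
    Phi m a v i.succ = v i.succ := by
  show (Fin.cons (∑ j, a j * v j) (fun i => v i.succ) : Fin (m+1) → F) i.succ = v i.succ
  rw [Fin.cons_succ]

lemma Phi_ker (m : ℕ) (a : Fin (m + 1) → F) (ha : a 0 ≠ 0) :
    LinearMap.ker (Phi m a) = ⊥ := by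
  rw [LinearMap.ker_eq_bot']
  intro v hv
  have hs : ∀ i : Fin m, v i.succ = 0 := by
    intro i
    have := congrFun hv i.succ
    rwa [Phi_apply_succ] at this
  have h0 := congrFun hv 0
  rw [Phi_apply_zero] at h0
  rw [Fin.sum_univ_succ] at h0
  simp only [hs, mul_zero, Finset.sum_const_zero, add_zero] at h0
  have hv0 : v 0 = 0 := by
    rcases mul_eq_zero.mp h0 with h | h
    · exact absurd h ha
    · exact h
  funext j
  induction j using Fin.cases with
  | zero => exact hv0
  | succ i => exact hs i

lemma claimA (hq : 5 ≤ Fintype.card F) (s : Finset (Option F))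
    (hs : s.card = Fintype.card F - 1) :
    LinearIndependent F
      (fun j : {j // j ∈ s} => uvec (Fintype.card F - 2) (j : Option F)) := by
  set q := Fintype.card F with hqdef
  set m := q - 2 with hmdef
  rw [Fintype.linearIndependent_iff]
  intro gf hgf
  set d : Option F → F := fun j => if h : j ∈ s then gf ⟨j, h⟩ else 0 with hd
  have hdval : ∀ j : {j // j ∈ s}, d (j : Option F) = gf j := by
    rintro ⟨j, hj⟩
    simp [hd, hj]
  have hcoord : ∀ i : Fin (m + 1), ∑ j ∈ s, d j * uvec m j i = 0 := by
    intro i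
    have hcf := congrFun hgf i
    rw [Finset.sum_apply] at hcf
    simp only [Pi.zero_apply] at hcf
    rw [← Finset.sum_coe_sort s (f := fun j => d j * uvec m j i)]
    rw [← hcf]
    refine Finset.sum_congr rfl fun j _ => ?_
    rw [hdval]
    simp
  set s' : Finset F := Finset.univ.filter (fun x => some x ∈ s) with hs'
  have hmem' : ∀ x : F, x ∈ s' ↔ some x ∈ s := by
    intro x; simp [hs']
  have hd_out : ∀ x : F, x ∉ s' → d (some x) = 0 := by
    intro x hx
    rw [hd]
    exact dif_neg (fun h => hx ((hmem' x).mpr h))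
  by_cases hn : none ∈ s
  · have hsplit : s = insert none (s'.image some) := by
      ext j
      cases j with
      | none => simp [hn]
      | some x => simp [hmem']
    have hcard' : s'.card = m := by
      have h1 : (insert none (s'.image some)).card = s'.card + 1 := by
        rw [Finset.card_insert_of_notMem (by simp),
          Finset.card_image_of_injective _ (Option.some_injective F)]
      rw [← hsplit, hs] at h1
      omega
    have hzero : ∀ x : F, d (some x) = 0 := by
      apply vand_zero s' hcard' _ hd_out
      intro k
      have hk := hcoord ⟨(k : ℕ), Nat.lt_succ_of_lt k.isLt⟩
      rw [hsplit, Finset.sum_insert (by simp),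
        Finset.sum_image (fun a _ b _ h => Option.some_injective F h)] at hk
      have hnl : (⟨(k : ℕ), by omega⟩ : Fin (m + 1)) ≠ Fin.last m := by
        intro hEq
        have := congrArg Fin.val hEq
        simp [Fin.last] at this
        omega
      simp only [uvec, if_neg hnl, mul_zero, zero_add] at hk
      exact hk
    have hnone : d none = 0 := by
      have hk := hcoord (Fin.last m)
      rw [hsplit, Finset.sum_insert (by simp),
        Finset.sum_image (fun a _ b _ h => Option.some_injective F h)] at hk
      simpa [uvec, hzero] using hk
    intro j
    rw [← hdval j]
    rcases j with ⟨(_ | x), hj⟩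
    · exact hnone
    · exact hzero x
  · have hsplit : s = s'.image some := by
      ext j
      cases j with
      | none => simp [hn]
      | some x => simp [hmem']
    have hcard' : s'.card = m + 1 := by
      rw [hsplit, Finset.card_image_of_injective _ (Option.some_injective F)] at hs
      omega
    have hzero : ∀ x : F, d (some x) = 0 := by
      apply vand_zero s' hcard' _ hd_out
      intro k
      have hk := hcoord ⟨(k : ℕ), k.isLt⟩
      rw [hsplit, Finset.sum_image (fun a _ b _ h => Option.some_injective F h)] at hk
      simpa [uvec] using hk
    intro j
    rw [← hdval j]
    rcases j with ⟨(_ | x), hj⟩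
    · exact absurd hj hn
    · exact hzero x

lemma gg_ne_zero (h2 : (2 : F) ≠ 0) (h3 : (3 : F) ≠ 0) (j : Option F) :
    gg j ≠ 0 := by
  cases j with
  | none => exact h2
  | some x =>
    show gsc x ≠ 0
    unfold gsc
    split_ifs
    · exact h3
    · simp
    · exact one_ne_zero

lemma claimC (hq : 5 ≤ Fintype.card F) (h2 : (2 : F) ≠ 0) (h3 : (3 : F) ≠ 0)
    (s : Finset (Option F)) (hs : s.card = Fintype.card F - 1) :
    LinearIndependent F
      (fun j : {j // j ∈ s} =>
        (Fin.cons 1 (zpt (Fintype.card F - 2) (j : Option F)) :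
          Fin (Fintype.card F - 2 + 1) → F)) := by
  set q := Fintype.card F with hqdef
  set m := q - 2 with hmdef
  have hA := claimA hq s hs
  set w : {j // j ∈ s} → Fˣ :=
    fun j => Units.mk0 ((gg (j : Option F))⁻¹)
      (inv_ne_zero (gg_ne_zero h2 h3 _)) with hw
  have hA2 := hA.units_smul w
  have hA3 := hA2.map' (Phi m (avec m))
    (Phi_ker m (avec m) (by rw [avec, if_pos rfl]; exact h3))
  have heq : (⇑(Phi m (avec m)) ∘ (w • fun j : {j // j ∈ s} => uvec m (j : Option F)))
      = fun j : {j // j ∈ s} => (Fin.cons 1 (zpt m (j : Option F)) : Fin (m + 1) → F) := by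
    funext j
    have hsmul : (w • fun j : {j // j ∈ s} => uvec m (j : Option F)) j
        = (gg (j : Option F))⁻¹ • uvec m (j : Option F) := by
      simp [hw, Pi.smul_apply', Units.smul_def]
    rw [Function.comp_apply, hsmul]
    funext i
    induction i using Fin.cases with
    | zero =>
      rw [Fin.cons_zero, Phi_apply_zero]
      rcases j with ⟨(_ | x), hj⟩
      · show ∑ i, avec m i * (((2:F))⁻¹ • uvec m none) i = 1
        have : ∀ i : Fin (m+1), avec m i * (((2:F))⁻¹ • uvec m none) i
            = if i = Fin.last m then avec m i * (2:F)⁻¹ else 0 := by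
          intro i
          simp only [Pi.smul_apply, uvec, smul_eq_mul]
          split_ifs <;> ring
        rw [Finset.sum_congr rfl fun i _ => this i]
        rw [Finset.sum_ite_eq' Finset.univ (Fin.last m) (fun i => avec m i * (2:F)⁻¹)]
        have hlast : (Fin.last m : Fin (m+1)) ≠ 0 := by
          intro hEq
          have := congrArg Fin.val hEq
          simp [Fin.last] at this
          omega
        simp only [Finset.mem_univ, if_true, avec, if_neg hlast]
        rw [mul_inv_cancel₀ h2]
      · show ∑ i, avec m i * ((gsc x)⁻¹ • uvec m (some x)) i = 1
        have : ∀ i : Fin (m+1), avec m i * ((gsc x)⁻¹ • uvec m (some x)) i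
            = (gsc x)⁻¹ * (avec m i * x ^ (i : ℕ)) := by
          intro i
          simp only [Pi.smul_apply, uvec, smul_eq_mul]
          ring
        rw [Finset.sum_congr rfl fun i _ => this i, ← Finset.mul_sum]
        rw [sum_avec_pow hq x]
        exact inv_mul_cancel₀ (gg_ne_zero h2 h3 (some x))
    | succ i =>
      rw [Fin.cons_succ, Phi_apply_succ]
      rcases j with ⟨(_ | x), hj⟩
      · show (((2:F))⁻¹ • uvec m none) i.succ = zpt m none i
        simp only [Pi.smul_apply, uvec, zpt, smul_eq_mul, mul_ite, mul_one, mul_zero]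
      · show ((gsc x)⁻¹ • uvec m (some x)) i.succ = zpt m (some x) i
        simp only [Pi.smul_apply, uvec, zpt, smul_eq_mul, Fin.val_succ]
  rw [heq] at hA3
  exact hA3

lemma zpt_injective (hq : 5 ≤ Fintype.card F) (h2 : (2 : F) ≠ 0) (h3 : (3 : F) ≠ 0) :
    Function.Injective (zpt (F := F) (Fintype.card F - 2)) := by
  intro j1 j2 hz
  obtain ⟨s, hsub, hscard⟩ := Finset.exists_superset_card_eq
    (s := ({j1, j2} : Finset (Option F))) (n := Fintype.card F - 1)
    (le_trans (Finset.card_insert_le _ _) (by simp; omega))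
    (by rw [Fintype.card_option]; omega)
  have hC := claimC hq h2 h3 s hscard
  have hinj := hC.injective
  have hmem1 : j1 ∈ s := hsub (by simp)
  have hmem2 : j2 ∈ s := hsub (by simp)
  have h1 : (⟨j1, hmem1⟩ : {j // j ∈ s}) = ⟨j2, hmem2⟩ := by
    apply hinj
    simp only [hz]
  exact congrArg Subtype.val h1

end RMaux


/-- For a finite field `F` with `q` elements and characteristic neither 2 nor 3, there
exists a `2`-information super-set for `RM_q(1, q-2)` of size `q+1`, and this is optimal:
the minimum size of a `2`-information super-set for `RM_q(1, q-2)` is exactly `q+1`. -/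
theorem rm1_q_two_superset_optimal {F : Type*} [Field F] [Fintype F] [DecidableEq F]
    (h2 : ringChar F ≠ 2) (h3 : ringChar F ≠ 3) :
    (∃ T : Multiset (Fin (Fintype.card F - 2) → F),
        Multiset.card T = Fintype.card F + 1 ∧
          IsInfoSuperSet (RMgen F (Fintype.card F) 1 (Fintype.card F - 2)) 2 T) ∧
      minSuperSize (RMgen F (Fintype.card F) 1 (Fintype.card F - 2)) 2
        = Fintype.card F + 1 := by
  classical
  haveI := ringChar.charP F
  have hp : (ringChar F).Prime := CharP.char_is_prime F (ringChar F)
  have h2' : (2 : F) ≠ 0 := by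
    intro h
    have hdvd : ringChar F ∣ 2 :=
      (CharP.cast_eq_zero_iff F (ringChar F) 2).mp (by exact_mod_cast h)
    exact h2 ((Nat.prime_dvd_prime_iff_eq hp Nat.prime_two).mp hdvd)
  have h3' : (3 : F) ≠ 0 := by
    intro h
    have hdvd : ringChar F ∣ 3 :=
      (CharP.cast_eq_zero_iff F (ringChar F) 3).mp (by exact_mod_cast h)
    exact h3 ((Nat.prime_dvd_prime_iff_eq hp Nat.prime_three).mp hdvd)
  have hq5 : 5 ≤ Fintype.card F := by
    obtain ⟨n, hpp, hcard⟩ := FiniteField.card F (ringChar F)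
    have h4 : ringChar F ≠ 4 := by
      intro h; rw [h] at hp; norm_num at hp
    have hp2 : 2 ≤ ringChar F := hp.two_le
    have hp5 : 5 ≤ ringChar F := by omega
    calc 5 ≤ ringChar F := hp5
    _ ≤ ringChar F ^ (n : ℕ) := Nat.le_self_pow n.pos.ne' _
    _ = Fintype.card F := hcard.symm
  set q := Fintype.card F with hqdef
  set m := q - 2 with hmdef
  have hlow : ∀ T' : Multiset (Fin m → F),
      IsInfoSuperSet (RMgen F q 1 m) 2 T' → q + 1 ≤ Multiset.card T' := by
    intro T' hT'
    have hq2 : 1 < q := by omega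
    have hWex : ∃ W : Multiset (Fin m → F),
        W ≤ T' ∧ Multiset.card W = Multiset.card T' - 2 := by
      refine ⟨(↑(List.take (Multiset.card T' - 2) T'.toList) : Multiset (Fin m → F)), ?_, ?_⟩
      · have hsub : (↑(List.take (Multiset.card T' - 2) T'.toList) : Multiset (Fin m → F))
            ≤ (↑T'.toList : Multiset (Fin m → F)) :=
          Multiset.coe_le.mpr ((List.take_sublist (Multiset.card T' - 2) T'.toList).subperm)
        rwa [Multiset.coe_toList] at hsub
      · rw [Multiset.coe_card, List.length_take, Multiset.length_toList]
        omega
    obtain ⟨W, hWle, hWcard⟩ := hWex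
    obtain ⟨I, hIW, hIcard, _⟩ := hT' W hWle hWcard
    have h1 : Multiset.card I.val ≤ Multiset.card W := Multiset.card_le_card hIW
    have h2c : I.card = m + 1 := by
      rw [hIcard]; exact RMaux.card_rho q m hq2
    have h3c : I.card = Multiset.card I.val := rfl
    clear hIcard
    omega
  have hzinj := RMaux.zpt_injective hq5 h2' h3'
  set T : Multiset (Fin m → F) := Multiset.map (RMaux.zpt m) Finset.univ.val with hT
  have hTcard : Multiset.card T = q + 1 := by
    rw [hT, Multiset.card_map]
    show Multiset.card Finset.univ.val = q + 1
    rw [← Finset.card_def, Finset.card_univ, Fintype.card_option]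
  have hTnodup : T.Nodup := Multiset.Nodup.map hzinj Finset.univ.nodup
  have hsuper : IsInfoSuperSet (RMgen F q 1 m) 2 T := by
    intro W hWle hWcard
    rw [hTcard] at hWcard
    have hWnodup : W.Nodup := Multiset.nodup_of_le hWle hTnodup
    set I : Finset (Fin m → F) := ⟨W, hWnodup⟩ with hI
    have hIcard : I.card = q - 1 := by
      show Multiset.card W = q - 1
      omega
    have hWT : ∀ y ∈ I, ∃ j : Option F, RMaux.zpt m j = y := by
      intro y hy
      have hyW : y ∈ W := Finset.mem_mk.mp hy
      have hyT : y ∈ T := Multiset.mem_of_le hWle hyW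
      rw [hT, Multiset.mem_map] at hyT
      obtain ⟨j, _, hj⟩ := hyT
      exact ⟨j, hj⟩
    set sJ : Finset (Option F) := Finset.univ.filter (fun j => RMaux.zpt m j ∈ I) with hsJ
    have him : sJ.image (RMaux.zpt m) = I := by
      ext y
      simp only [Finset.mem_image, hsJ, Finset.mem_filter, Finset.mem_univ, true_and]
      constructor
      · rintro ⟨j, hj, rfl⟩; exact hj
      · intro hy
        obtain ⟨j, hj⟩ := hWT y hy
        exact ⟨j, by rw [hj]; exact hy, hj⟩
    have hsJcard : sJ.card = q - 1 := by
      rw [← hIcard, ← him, Finset.card_image_of_injective _ hzinj]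
    refine ⟨I, le_refl _, ?_, ?_⟩
    · rw [RMaux.card_rho q m (by omega), hIcard]; omega
    · have hC := RMaux.claimC hq5 h2' h3' sJ hsJcard
      have hmapmem : ∀ j : {j // j ∈ sJ}, RMaux.zpt m (j : Option F) ∈ I :=
        fun j => by rw [← him]; exact Finset.mem_image_of_mem _ j.2
      let e : {j // j ∈ sJ} ≃ {y // y ∈ I} :=
        Equiv.ofBijective (fun j => ⟨RMaux.zpt m (j : Option F), hmapmem j⟩)
          ⟨fun j1 j2 h => Subtype.ext (hzinj (congrArg Subtype.val h)),
           fun y => by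
             obtain ⟨j, hj, hjy⟩ := Finset.mem_image.mp
               (show (y : Fin m → F) ∈ sJ.image (RMaux.zpt m) by rw [him]; exact y.2)
             exact ⟨⟨j, hj⟩, Subtype.ext hjy⟩⟩
      set β := Equiv.ofBijective _ (RMaux.theta_bijective q m (by omega)) with hβ
      have hLI : LinearIndependent F
          (fun y : {y // y ∈ I} => (Fin.cons 1 (y : Fin m → F) : Fin (m + 1) → F)) := by
        rw [← linearIndependent_equiv e]
        exact hC
      have hmap := hLI.map' (LinearMap.funLeft F F β.symm)
        (LinearMap.ker_eq_bot.mpr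
          (LinearMap.funLeft_injective_of_surjective F F _ β.symm.surjective))
      have hcols : (fun y : {y // y ∈ I} => fun r => RMgen F q 1 m r (y : Fin m → F))
          = (⇑(LinearMap.funLeft F F β.symm) ∘
              fun y : {y // y ∈ I} =>
                (Fin.cons 1 (y : Fin m → F) : Fin (m + 1) → F)) := by
        funext y
        funext r
        rw [Function.comp_apply, LinearMap.funLeft_apply]
        have hr : r = β (β.symm r) := (Equiv.apply_symm_apply β r).symm
        conv_lhs => rw [hr]
        exact RMaux.col_eq (by omega) (y : Fin m → F) (β.symm r)
      rw [hcols]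
      exact hmap
  refine ⟨⟨T, hTcard, hsuper⟩, ?_⟩
  unfold minSuperSize
  apply le_antisymm
  · exact Nat.sInf_le ⟨T, hsuper, hTcard⟩
  · refine le_csInf ⟨q + 1, T, hsuper, hTcard⟩ ?_
    rintro c ⟨T', hT', rfl⟩
    exact hlow T' hT'
end
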